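/- arXiv:0711.2704 — 2 statements merged into one kernel-verified Lean document; each statement's English description precedes it below -/
import Mathlib

section
/- Let Y be a simplicial complex and a, b vertices of Y such that (1) the graph lk_Y(a) ∩ lk_Y(b) is connected, and (2) there exists a vertex d with {a,b,d} a 2-face of Y. Then for any vertex c of lk_Y(a) ∩ lk_Y(b), the 3-cycle with edges {a,b}, {a,c}, {b,c} bounds an embedded disk in Y; in particular this 3-cycle is null-homotopic in Y. -/
open Finset MeasureTheory
open scoped ENNReal

/-! ### Abstract simplicial complexes (dimension ≤ 2 in applications) -/

/-- An abstract simplicial complex on the vertex type `V`, given by its set of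
(nonempty, finite) faces, closed under passing to nonempty subsets. -/
structure SComplex (V : Type) where
  faces : Set (Finset V)
  nonempty_of_mem : ∀ s ∈ faces, s.Nonempty
  down_closed : ∀ s ∈ faces, ∀ t, t ⊆ s → t.Nonempty → t ∈ faces

namespace SComplex

variable {V W : Type}

/-- `fcount X i` is the number of `i`-dimensional faces of `X` (faces with `i+1` vertices). -/
noncomputable def fcount (X : SComplex V) (i : ℕ) : ℕ :=
  Nat.card {s : Finset V // s ∈ X.faces ∧ s.card = i + 1}

/-- A subcomplex is a complex whose faces are among the faces of `X`. -/
def IsSubcomplex (Z X : SComplex V) : Prop := Z.faces ⊆ X.faces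

/-- `X` is (at most) two-dimensional: every face has at most 3 vertices. -/
def dim2 (X : SComplex V) : Prop := ∀ s ∈ X.faces, s.card ≤ 3

/-- Euler characteristic of a 2-dimensional complex. -/
noncomputable def chi (X : SComplex V) : ℤ :=
  (X.fcount 0 : ℤ) - X.fcount 1 + X.fcount 2

/-- The quantity `L(X) = 2 f₁(X) - 3 f₂(X)`. -/
noncomputable def Lval (X : SComplex V) : ℤ :=
  2 * (X.fcount 1 : ℤ) - 3 * X.fcount 2

/-- The geometric realization of `X`, as a set of functions `V → ℝ`
(convex combinations of the vertices of a face). -/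
def realization (X : SComplex V) : Set (V → ℝ) :=
  {x | ∃ s ∈ X.faces, (∀ v, 0 ≤ x v) ∧ (∀ v, v ∉ s → x v = 0) ∧ ∑ v ∈ s, x v = 1}

end SComplex

/-- A simplicial map between simplicial complexes: a vertex map carrying faces to faces. -/
structure SMap {V W : Type} [DecidableEq W] (X : SComplex V) (Y : SComplex W) where
  toFun : V → W
  map_face : ∀ s ∈ X.faces, s.image toFun ∈ Y.faces

/-- The simplicial cycle `C_r` of length `r`, with vertex set `ZMod r` and
edges `{i, i+1}`. -/
def cycleC (r : ℕ) : SComplex (ZMod r) where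
  faces := {s | (∃ i, s = {i}) ∨ (∃ i : ZMod r, s = {i, i + 1})}
  nonempty_of_mem := by rintro s (⟨i, rfl⟩ | ⟨i, rfl⟩) <;> simp
  down_closed := by
    rintro s (⟨i, rfl⟩ | ⟨i, rfl⟩) t ht hne
    · left
      exact ⟨i, (Finset.Nonempty.subset_singleton_iff hne).mp ht⟩
    · classical
      have h1 : t = {i} ∨ t = {i + 1} ∨ t = {i, i + 1} := by
        have := Finset.subset_insert_iff.mp ht
        rcases Finset.eq_empty_or_nonempty (t.erase i) with h | h
        · left
          have hti : i ∈ t := by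
            by_contra hi
            rw [Finset.erase_eq_of_notMem hi] at h
            exact hne.ne_empty h
          apply Finset.eq_singleton_iff_nonempty_unique_mem.mpr
          refine ⟨hne, fun x hx => ?_⟩
          by_contra hxi
          exact (Finset.notMem_empty x) (h ▸ Finset.mem_erase.mpr ⟨hxi, hx⟩)
        · have hsub : t.erase i ⊆ {i + 1} := this
          have h2 : t.erase i = {i + 1} := (Finset.Nonempty.subset_singleton_iff h).mp hsub
          by_cases hti : i ∈ t
          · right; right
            ext x
            simp only [Finset.mem_insert, Finset.mem_singleton]
            constructor
            · intro hx
              by_cases hxi : x = i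
              · exact Or.inl hxi
              · right
                have : x ∈ t.erase i := Finset.mem_erase.mpr ⟨hxi, hx⟩
                rw [h2] at this
                simpa using this
            · rintro (rfl | rfl)
              · exact hti
              · have : i + 1 ∈ t.erase i := h2 ▸ Finset.mem_singleton_self _
                exact (Finset.mem_erase.mp this).2
          · right; left
            rw [Finset.erase_eq_of_notMem hti] at h2
            exact h2
      rcases h1 with h | h | h
      · exact Or.inl ⟨i, h⟩
      · exact Or.inl ⟨i + 1, h⟩
      · exact Or.inr ⟨i, h⟩

namespace SComplex

variable {V W : Type}

/-- The affine extension of a vertex map, on the ambient spaces of realizations. -/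
noncomputable def affineExtend [Fintype V] [DecidableEq W] (f : V → W) (x : V → ℝ) : W → ℝ :=
  fun w => ∑ v ∈ Finset.univ.filter (fun v => f v = w), x v

lemma continuous_affineExtend [Fintype V] [DecidableEq W] (f : V → W) :
    Continuous (affineExtend f : (V → ℝ) → (W → ℝ)) := by
  apply continuous_pi
  intro w
  exact continuous_finset_sum _ fun v _ => continuous_apply v

lemma affineExtend_mem [Fintype V] [DecidableEq W]
    {X : SComplex V} {Y : SComplex W} (f : SMap X Y) {x : V → ℝ}
    (hx : x ∈ X.realization) : affineExtend f.toFun x ∈ Y.realization := by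
  classical
  obtain ⟨s, hs, hnn, hsupp, hsum⟩ := hx
  refine ⟨s.image f.toFun, f.map_face s hs, ?_, ?_, ?_⟩
  · intro w
    exact Finset.sum_nonneg fun v _ => hnn v
  · intro w hw
    apply Finset.sum_eq_zero
    intro v hv
    simp only [Finset.mem_filter] at hv
    by_contra hvx
    have hvs : v ∈ s := by
      by_contra h
      exact hvx (hsupp v h)
    exact hw (Finset.mem_image.mpr ⟨v, hvs, hv.2⟩)
  · have key : ∀ w ∈ s.image f.toFun,
        affineExtend f.toFun x w = ∑ v ∈ s.filter (fun v => f.toFun v = w), x v := by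
      intro w _
      refine (Finset.sum_subset (Finset.filter_subset_filter _ (Finset.subset_univ s)) ?_).symm
      intro v hv hvn
      simp only [Finset.mem_filter] at hv hvn
      exact hsupp v (fun hvs => hvn ⟨hvs, hv.2⟩)
    rw [Finset.sum_congr rfl key,
      Finset.sum_fiberwise_of_maps_to (fun v hv => Finset.mem_image_of_mem _ hv), hsum]

end SComplex

/-- The continuous map between geometric realizations induced by a simplicial map. -/
noncomputable def SMap.realize {V W : Type} [Fintype V] [DecidableEq W]
    {X : SComplex V} {Y : SComplex W} (f : SMap X Y) :
    C(X.realization, Y.realization) :=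
  ⟨fun x => ⟨SComplex.affineExtend f.toFun x.1, SComplex.affineExtend_mem f x.2⟩,
   Continuous.subtype_mk
     ((SComplex.continuous_affineExtend f.toFun).comp continuous_subtype_val) _⟩

/-! ### Mapping cylinders, disks, fillings and area -/

/-- The gluing relation for the mapping cylinder of `g : A → B`:
the end `A × {1}` of the cylinder is glued to `B` along `g`. -/
def cylRel {A B : Type} (g : A → B) :
    (A × unitInterval ⊕ B) → (A × unitInterval ⊕ B) → Prop :=
  fun x y => ∃ a : A, x = Sum.inl (a, 1) ∧ y = Sum.inr (g a)

/-- The mapping cylinder of `g : A → B`. -/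
def MappingCyl {A B : Type} (g : A → B) : Type := Quot (cylRel g)

instance {A B : Type} [TopologicalSpace A] [TopologicalSpace B] (g : A → B) :
    TopologicalSpace (MappingCyl g) :=
  inferInstanceAs (TopologicalSpace (Quot (cylRel g)))

/-- The base `A × {0}` of the mapping cylinder. -/
def cylBase {A B : Type} (g : A → B) : Set (MappingCyl g) :=
  Set.range fun a : A => Quot.mk (cylRel g) (Sum.inl (a, 0))

/-- The closed unit disk in the plane. -/
def unitDisk : Set (ℝ × ℝ) := Metric.closedBall 0 1

/-- The unit circle in the plane. -/
def unitCircle : Set (ℝ × ℝ) := Metric.sphere 0 1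

/-- A space `T` together with a subset `Bd` is a (closed, topological) disk with
boundary `Bd` if there is a homeomorphism to the closed unit disk carrying
`Bd` onto the unit circle. -/
def IsDiskWithBoundary (T : Type) [TopologicalSpace T] (Bd : Set T) : Prop :=
  ∃ h : T ≃ₜ unitDisk, (fun t => ((h t : ℝ × ℝ))) '' Bd = unitCircle

/-- A filling of a simplicial loop `γ : C_r → X`:  simplicial maps
`C_r → D → X` composing to `γ`, where `D` is a finite simplicial complex such
that the mapping cylinder of the realization of `b : C_r → D` is a topological
disk whose boundary is `C_r × {0}`. -/
structure Filling {V : Type} [DecidableEq V] (X : SComplex V) (r : ℕ) [NeZero r]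
    (γ : SMap (cycleC r) X) where
  m : ℕ
  D : SComplex (Fin m)
  b : SMap (cycleC r) D
  proj : SMap D X
  comm : ∀ i : ZMod r, proj.toFun (b.toFun i) = γ.toFun i
  disk : IsDiskWithBoundary (MappingCyl (⇑(SMap.realize b))) (cylBase (⇑(SMap.realize b)))

/-- The (combinatorial) area of a simplicial loop: the least number of
2-dimensional faces in a filling, and `∞` if the loop has no filling
(equivalently, is not contractible). -/
noncomputable def area {V : Type} [DecidableEq V] (X : SComplex V) (r : ℕ) [NeZero r]
    (γ : SMap (cycleC r) X) : ℝ≥0∞ :=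
  ⨅ F : Filling X r γ, (F.D.fcount 2 : ℝ≥0∞)

/-- A simplicial loop is contractible iff it admits a filling. -/
def LoopContractible {V : Type} [DecidableEq V] (X : SComplex V) (r : ℕ) [NeZero r]
    (γ : SMap (cycleC r) X) : Prop :=
  Nonempty (Filling X r γ)
/-! ### The Linial–Meshulam random 2-complex -/

/-- The potential 2-faces on `n` vertices: 3-element subsets of `Fin n`. -/
def Triple (n : ℕ) : Type := {s : Finset (Fin n) // s.card = 3}

instance (n : ℕ) : Fintype (Triple n) := by unfold Triple; infer_instance

/-- The Bernoulli measure on `Bool` with success probability `p` (truncated to `[0,1]`). -/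
noncomputable def bern (p : ℝ) : Measure Bool :=
  (PMF.bernoulli (min (Real.toNNReal p) 1) (min_le_right _ _)).toMeasure

instance (p : ℝ) : IsProbabilityMeasure (bern p) :=
  PMF.toMeasure.isProbabilityMeasure _

/-- The distribution of the Linial–Meshulam random complex `Y(n,p)`:
each potential 2-face appears independently with probability `p`.  A sample
point records for each triple whether it is a face. -/
noncomputable def lmMeasure (n : ℕ) (p : ℝ) : Measure (Triple n → Bool) :=
  Measure.pi fun _ => bern p

/-- The simplicial complex on the vertex set `[n] = {1,…,n} ⊆ ℕ` determined by a sample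
`ω` of the Linial–Meshulam process: it has the complete 1-skeleton on `[n]`, and its
2-faces are the triples with `ω t = true`. -/
def lmComplex (n : ℕ) (ω : Triple n → Bool) : SComplex ℕ where
  faces := {s | s.Nonempty ∧ (∀ v ∈ s, 1 ≤ v ∧ v ≤ n) ∧
    (s.card ≤ 2 ∨ ∃ t : Triple n, ω t = true ∧ s = t.1.image (fun v : Fin n => (v : ℕ) + 1))}
  nonempty_of_mem := fun _ hs => hs.1
  down_closed := by
    classical
    rintro s ⟨-, hrange, hs⟩ t hts htne
    refine ⟨htne, fun v hv => hrange v (hts hv), ?_⟩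
    rcases Nat.lt_or_ge t.card 3 with h | h
    · exact Or.inl (by omega)
    · rcases hs with h2 | ⟨u, hu, rfl⟩
      · have := Finset.card_le_card hts
        omega
      · have hinj : Function.Injective (fun v : Fin n => (v : ℕ) + 1) := by
          intro a b hab
          simp only [add_left_inj] at hab
          exact Fin.val_injective hab
        have hcard : (u.1.image fun v : Fin n => (v : ℕ) + 1).card = 3 := by
          rw [Finset.card_image_of_injective _ hinj, u.2]
        right
        exact ⟨u, hu, Finset.eq_of_subset_of_card_le hts (by omega)⟩

/-! ### Links -/

/-- The common vertices of the links of `a` and `b` in `Y`. -/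
def LinkVerts {V : Type} [DecidableEq V] (Y : SComplex V) (a b : V) : Type :=
  {v : V // v ≠ a ∧ v ≠ b ∧ ({a, v} : Finset V) ∈ Y.faces ∧ ({b, v} : Finset V) ∈ Y.faces}

/-- The intersection `lk_Y(a) ∩ lk_Y(b)` of the links of vertices `a` and `b`
in a 2-complex `Y`, as a graph: the vertices are common neighbours of `a` and `b`,
and `{u,v}` is an edge iff both `{a,u,v}` and `{b,u,v}` are 2-faces of `Y`. -/
def linkInter {V : Type} [DecidableEq V] (Y : SComplex V) (a b : V) :
    SimpleGraph (LinkVerts Y a b) where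
  Adj u v := u.1 ≠ v.1 ∧ ({a, u.1, v.1} : Finset V) ∈ Y.faces ∧
    ({b, u.1, v.1} : Finset V) ∈ Y.faces
  symm := by
    constructor
    rintro u v ⟨h1, h2, h3⟩
    refine ⟨h1.symm, ?_, ?_⟩
    · rwa [Finset.pair_comm v.1 u.1]
    · rwa [Finset.pair_comm v.1 u.1]
  loopless := by constructor; rintro u ⟨h1, -⟩; exact h1 rfl

/-! ### Word-hyperbolic groups -/

/-- The word length of `g⁻¹ * h` with respect to a generating set `S`. -/
noncomputable def wordDist {G : Type*} [Group G] (S : Set G) (g h : G) : ℕ :=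
  sInf {n : ℕ | ∃ w : List G, w.length = n ∧ (∀ x ∈ w, x ∈ S ∨ x⁻¹ ∈ S) ∧ w.prod = g⁻¹ * h}

/-- A group is word hyperbolic (in the sense of Gromov) if it has a finite
generating set whose word metric satisfies the four-point Gromov hyperbolicity
condition for some constant `δ`. -/
def IsHyperbolicGroup (G : Type*) [Group G] : Prop :=
  ∃ S : Set G, S.Finite ∧ Subgroup.closure S = ⊤ ∧ ∃ δ : ℝ, 0 ≤ δ ∧
    ∀ x y z w : G, (wordDist S x y : ℝ) + wordDist S z w ≤
      max ((wordDist S x z : ℝ) + wordDist S y w)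
        ((wordDist S x w : ℝ) + wordDist S y z) + δ

/-! ### Wedges of circles, spheres and projective planes -/

/-- The 2-sphere. -/
noncomputable def Sphere2 : Type := Metric.sphere (0 : EuclideanSpace ℝ (Fin 3)) 1

noncomputable instance : TopologicalSpace Sphere2 :=
  inferInstanceAs (TopologicalSpace (Metric.sphere (0 : EuclideanSpace ℝ (Fin 3)) 1))

noncomputable def sphereBase : Sphere2 := by
  refine ⟨EuclideanSpace.single 0 1, ?_⟩
  show EuclideanSpace.single (0 : Fin 3) (1 : ℝ) ∈ Metric.sphere 0 1
  simp [EuclideanSpace.norm_single]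

/-- The real projective plane: the quotient of the 2-sphere identifying antipodes. -/
def RP2 : Type :=
  Quot (fun x y : Sphere2 => x.1 = -y.1)

instance : TopologicalSpace RP2 :=
  inferInstanceAs (TopologicalSpace (Quot _))

noncomputable def rp2Base : RP2 := Quot.mk _ sphereBase

/-- The wedge of a family of pointed spaces: the disjoint union with
all basepoints identified. -/
def Wedge {ι : Type} (T : ι → Type) [∀ i, TopologicalSpace (T i)] (pt : ∀ i, T i) : Type :=
  Quot (fun x y : (Σ i, T i) => x.2 = pt x.1 ∧ y.2 = pt y.1)

instance {ι : Type} (T : ι → Type) [∀ i, TopologicalSpace (T i)] (pt : ∀ i, T i) :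
    TopologicalSpace (Wedge T pt) :=
  inferInstanceAs (TopologicalSpace (Quot _))

/-- The family consisting of a point, `k` circles, `l` 2-spheres and `m`
projective planes. -/
def wedgeFam (k l m : ℕ) : (Unit ⊕ Fin k ⊕ Fin l ⊕ Fin m) → Type
  | .inl _ => PUnit
  | .inr (.inl _) => Circle
  | .inr (.inr (.inl _)) => Sphere2
  | .inr (.inr (.inr _)) => RP2

noncomputable instance (k l m : ℕ) (i : Unit ⊕ Fin k ⊕ Fin l ⊕ Fin m) :
    TopologicalSpace (wedgeFam k l m i) :=
  match i with
  | .inl _ => inferInstanceAs (TopologicalSpace PUnit)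
  | .inr (.inl _) => inferInstanceAs (TopologicalSpace Circle)
  | .inr (.inr (.inl _)) => inferInstanceAs (TopologicalSpace Sphere2)
  | .inr (.inr (.inr _)) => inferInstanceAs (TopologicalSpace RP2)

noncomputable def wedgeBase (k l m : ℕ) : ∀ i, wedgeFam k l m i
  | .inl _ => PUnit.unit
  | .inr (.inl _) => (1 : Circle)
  | .inr (.inr (.inl _)) => sphereBase
  | .inr (.inr (.inr _)) => rp2Base

/-- A wedge of `k` circles, `l` 2-spheres and `m` real projective planes. -/
noncomputable def WedgeCSP (k l m : ℕ) : Type :=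
  Wedge (wedgeFam k l m) (wedgeBase k l m)

noncomputable instance (k l m : ℕ) : TopologicalSpace (WedgeCSP k l m) :=
  inferInstanceAs (TopologicalSpace (Wedge _ _))

/-- A family of `k` copies of `ℤ` and `l` copies of `ℤ/2ℤ` (as multiplicative groups). -/
def mixedFam (k l : ℕ) : (Fin k ⊕ Fin l) → Type
  | .inl _ => Multiplicative ℤ
  | .inr _ => Multiplicative (ZMod 2)

instance (k l : ℕ) (i : Fin k ⊕ Fin l) : Group (mixedFam k l i) :=
  match i with
  | .inl _ => inferInstanceAs (Group (Multiplicative ℤ))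
  | .inr _ => inferInstanceAs (Group (Multiplicative (ZMod 2)))

/-! ### Embeddings, 3-inclusions, sparsity, and `e`-invariants -/

/-- An embedding of the complex `Z` into `X`: an injective simplicial map. -/
def EmbedsIn {V : Type} [DecidableEq V] (Z : SComplex ℕ) (X : SComplex V) : Prop :=
  ∃ g : ℕ → V, Set.InjOn g {v : ℕ | ({v} : Finset ℕ) ∈ Z.faces} ∧
    ∀ s ∈ Z.faces, s.image g ∈ X.faces

/-- A `3`-inclusion of `Z` into `X`: an injective simplicial map fixing the
vertices `1`, `2`, `3`. -/
def Incl3 (Z X : SComplex ℕ) : Prop :=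
  ∃ g : ℕ → ℕ, Set.InjOn g {v : ℕ | ({v} : Finset ℕ) ∈ Z.faces} ∧
    (g 1 = 1 ∧ g 2 = 2 ∧ g 3 = 3) ∧
    ∀ s ∈ Z.faces, s.image g ∈ X.faces

/-- `X` is `(ε, m)`-sparse: no 2-complex `Z` with `f₂(Z) ≤ m` and
`f₀(Z) < (1/2 + ε) f₂(Z)` embeds into `X`. -/
def SparseEM {V : Type} [DecidableEq V] (ε : ℝ) (m : ℕ) (X : SComplex V) : Prop :=
  ∀ Z : SComplex ℕ, Z.faces.Finite → Z.dim2 →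
    Z.fcount 2 ≤ m → ((Z.fcount 0 : ℝ) < (1/2 + ε) * Z.fcount 2) →
    ¬ EmbedsIn Z X

/-- `X` is `(ε, m, 3)`-sparse: there is no `3`-inclusion into `X` of a
2-complex `Z` with `[3] ⊆ F₀(Z)`, `f₂(Z) ≤ m` and `f₀(Z) - 3 < (1/2 + ε) f₂(Z)`. -/
def SparseEM3 (ε : ℝ) (m : ℕ) (X : SComplex ℕ) : Prop :=
  ∀ Z : SComplex ℕ, Z.faces.Finite → Z.dim2 →
    ({1} : Finset ℕ) ∈ Z.faces → ({2} : Finset ℕ) ∈ Z.faces → ({3} : Finset ℕ) ∈ Z.faces →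
    Z.fcount 2 ≤ m → ((Z.fcount 0 : ℝ) - 3 < (1/2 + ε) * Z.fcount 2) →
    ¬ Incl3 Z X

/-- The invariant `e_w(X)`: the infimum of `(f₀(Z) - w)/f₂(Z)` over subcomplexes
`Z ⊆ X` containing the vertices `1, …, w` (and having at least one 2-face). -/
noncomputable def eW (w : ℕ) (X : SComplex ℕ) : ℝ :=
  sInf {x : ℝ | ∃ Z : SComplex ℕ, Z.IsSubcomplex X ∧
    (∀ i : ℕ, 1 ≤ i → i ≤ w → ({i} : Finset ℕ) ∈ Z.faces) ∧
    0 < Z.fcount 2 ∧ x = ((Z.fcount 0 : ℝ) - w) / Z.fcount 2}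

/-! ### Immersions -/

/-- The (vertex set of the) star of a face `s`. -/
def SComplex.star {V : Type} (X : SComplex V) (s : Finset V) : Set V :=
  {v : V | ∃ t ∈ X.faces, s ⊆ t ∧ v ∈ t}

/-- A simplicial map is a `d`-immersion if its restriction to the star of any
`d`-dimensional face is an embedding (injective on vertices). -/
def IsImmersion {V W : Type} [DecidableEq W] (d : ℕ) {X : SComplex V} {Y : SComplex W}
    (f : SMap X Y) : Prop :=
  ∀ s ∈ X.faces, s.card = d + 1 → Set.InjOn f.toFun (X.star s)

/-! ### Induced maps on fundamental groups -/

/-- The homomorphism of fundamental groups induced by a continuous map. -/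
noncomputable def pi1Map {A B : Type} [TopologicalSpace A] [TopologicalSpace B]
    (f : C(A, B)) (x : A) : FundamentalGroup A x →* FundamentalGroup B (f x) :=
  CategoryTheory.Functor.mapEnd (FundamentalGroupoid.mk x)
    (FundamentalGroupoid.fundamentalGroupoidFunctor.map
      (X := TopCat.of A) (Y := TopCat.of B) (TopCat.ofHom f))

/-- `realization` is monotone with respect to subcomplexes. -/
lemma SComplex.realization_mono {V : Type} {Z X : SComplex V} (h : Z.IsSubcomplex X) :
    Z.realization ⊆ X.realization := by
  rintro x ⟨s, hs, h1, h2, h3⟩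
  exact ⟨s, h hs, h1, h2, h3⟩

/-- The inclusion of realizations induced by a subcomplex inclusion. -/
noncomputable def inclCM {V : Type} {Z X : SComplex V} (h : Z.IsSubcomplex X) :
    C(Z.realization, X.realization) :=
  ⟨Set.inclusion (SComplex.realization_mono h), continuous_inclusion _⟩


/-- The union of the three straight segments joining the vertex points `a`, `b`, `c`
in the ambient space of the realization:  the geometric 3-cycle `abc`. -/
def triangleSet {V : Type} [DecidableEq V] (a b c : V) : Set (V → ℝ) :=
  segment ℝ (fun v => if v = a then 1 else 0) (fun v => if v = b then 1 else 0) ∪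
  segment ℝ (fun v => if v = b then 1 else 0) (fun v => if v = c then 1 else 0) ∪
  segment ℝ (fun v => if v = a then 1 else 0) (fun v => if v = c then 1 else 0)

/-- The 3-cycle `abc` bounds an embedded disk in `Y`: some subset of the
realization of `Y` is a topological disk whose boundary is the geometric
3-cycle `abc`. -/
def BoundsEmbeddedDisk {V : Type} [DecidableEq V] (Y : SComplex V) (a b c : V) : Prop :=
  ∃ K : Set (V → ℝ), K ⊆ Y.realization ∧
    ∃ h : K ≃ₜ unitDisk,
      Subtype.val '' (⇑h ⁻¹' {y : unitDisk | (y : ℝ × ℝ) ∈ unitCircle}) = triangleSet a b c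

/-! ### Auxiliary development for `three_cycle_bounds_disk` -/

noncomputable section TCBaux

namespace TCB

/-! #### The ℓ¹-disk model -/

/-- The ℓ¹ norm on the plane. -/
def n1 (v : ℝ × ℝ) : ℝ := |v.1| + |v.2|

/-- The closed ℓ¹ unit disk (a diamond). -/
def QQ : Set (ℝ × ℝ) := {z | n1 z ≤ 1}

lemma n1_nonneg (v : ℝ × ℝ) : 0 ≤ n1 v := add_nonneg (abs_nonneg _) (abs_nonneg _)

lemma n1_eq_zero {v : ℝ × ℝ} : n1 v = 0 ↔ v = 0 := by
  rw [n1, add_eq_zero_iff_of_nonneg (abs_nonneg _) (abs_nonneg _)]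
  simp [Prod.ext_iff]

lemma norm_le_n1 (v : ℝ × ℝ) : ‖v‖ ≤ n1 v := by
  rw [Prod.norm_def, n1]
  simp only [Real.norm_eq_abs, sup_le_iff]
  constructor
  · exact le_add_of_nonneg_right (abs_nonneg _)
  · exact le_add_of_nonneg_left (abs_nonneg _)

lemma continuous_n1 : Continuous n1 := (continuous_fst.abs.add continuous_snd.abs)

lemma n1_smul (c : ℝ) (v : ℝ × ℝ) : n1 (c • v) = |c| * n1 v := by
  simp [n1, abs_mul, mul_add]

/-- Radial map from the diamond to the sup-norm disk. -/
def h1 (v : ℝ × ℝ) : ℝ × ℝ := (n1 v / ‖v‖) • v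

/-- Radial map from the sup-norm disk to the diamond. -/
def g1 (w : ℝ × ℝ) : ℝ × ℝ := (‖w‖ / n1 w) • w

lemma h1_zero : h1 0 = 0 := by simp [h1]

lemma g1_zero : g1 0 = 0 := by simp [g1]

lemma norm_h1 (v : ℝ × ℝ) : ‖h1 v‖ = n1 v := by
  rcases eq_or_ne v 0 with rfl | hv
  · simp [h1, n1]
  · have hnv : ‖v‖ ≠ 0 := norm_ne_zero_iff.mpr hv
    rw [h1, norm_smul, Real.norm_eq_abs,
      abs_of_nonneg (div_nonneg (n1_nonneg v) (norm_nonneg v)), div_mul_cancel₀ _ hnv]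

lemma n1_g1 (w : ℝ × ℝ) : n1 (g1 w) = ‖w‖ := by
  rcases eq_or_ne w 0 with rfl | hw
  · simp [g1, n1]
  · have hn1 : n1 w ≠ 0 := fun h => hw (n1_eq_zero.mp h)
    rw [g1, n1_smul, abs_of_nonneg (div_nonneg (norm_nonneg w) (n1_nonneg w)),
      div_mul_cancel₀ _ hn1]

lemma g1_h1 (v : ℝ × ℝ) : g1 (h1 v) = v := by
  rcases eq_or_ne v 0 with rfl | hv
  · simp [h1, g1]
  · have hnv : ‖v‖ ≠ 0 := norm_ne_zero_iff.mpr hv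
    have hn1 : n1 v ≠ 0 := fun h => hv (n1_eq_zero.mp h)
    rw [g1, norm_h1, h1, n1_smul, smul_smul,
      abs_of_nonneg (div_nonneg (n1_nonneg v) (norm_nonneg v))]
    rw [show n1 v / (n1 v / ‖v‖ * n1 v) * (n1 v / ‖v‖) = 1 by field_simp, one_smul]

lemma h1_g1 (w : ℝ × ℝ) : h1 (g1 w) = w := by
  rcases eq_or_ne w 0 with rfl | hw
  · simp [h1, g1]
  · have hnw : ‖w‖ ≠ 0 := norm_ne_zero_iff.mpr hw
    have hn1 : n1 w ≠ 0 := fun h => hw (n1_eq_zero.mp h)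
    rw [h1, n1_g1, g1, norm_smul, Real.norm_eq_abs,
      abs_of_nonneg (div_nonneg (norm_nonneg w) (n1_nonneg w)), smul_smul]
    rw [show ‖w‖ / (‖w‖ / n1 w * ‖w‖) * (‖w‖ / n1 w) = 1 by field_simp, one_smul]

lemma continuous_h1 : Continuous h1 := by
  rw [continuous_iff_continuousAt]
  intro v
  rcases eq_or_ne v 0 with rfl | hv
  · rw [ContinuousAt, h1_zero]
    apply squeeze_zero_norm (fun x => (norm_h1 x).le)
    have := continuous_n1.tendsto 0
    simpa [n1] using this
  · have hnv : ‖v‖ ≠ 0 := norm_ne_zero_iff.mpr hv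
    exact ((continuous_n1.continuousAt.div continuous_norm.continuousAt hnv).smul
      continuousAt_id)

lemma isCompact_QQ : IsCompact QQ := by
  refine (isCompact_closedBall (0 : ℝ × ℝ) 1).of_isClosed_subset
    (isClosed_Iic.preimage continuous_n1) ?_
  intro v hv
  exact mem_closedBall_zero_iff.mpr ((norm_le_n1 v).trans hv)

instance : CompactSpace QQ := isCompact_iff_compactSpace.mp isCompact_QQ

/-- The bijection between the diamond and the unit disk. -/
def eQD : QQ ≃ unitDisk where
  toFun v := ⟨h1 v.1, by
    rw [unitDisk, mem_closedBall_zero_iff, norm_h1]; exact v.2⟩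
  invFun w := ⟨g1 w.1, by
    show n1 _ ≤ 1
    rw [n1_g1]; exact mem_closedBall_zero_iff.mp w.2⟩
  left_inv v := Subtype.ext (g1_h1 v.1)
  right_inv w := Subtype.ext (h1_g1 w.1)

/-- The homeomorphism between the diamond and the unit disk. -/
def hQD : QQ ≃ₜ unitDisk :=
  Continuous.homeoOfEquivCompactToT2 (f := eQD)
    ((continuous_h1.comp continuous_subtype_val).subtype_mk _)

lemma hQD_circle (z : QQ) : ((hQD z : ℝ × ℝ) ∈ unitCircle) ↔ n1 z.1 = 1 := by
  show (h1 z.1 ∈ Metric.sphere 0 1) ↔ _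
  rw [mem_sphere_zero_iff_norm, norm_h1]

/-! #### Fans over a path in the link -/

/-- The vertex point `e v` in the realization. -/
def ee {V : Type} [DecidableEq V] (a : V) : V → ℝ := fun v => if v = a then 1 else 0

/-- The midpoint of the vertices `a` and `b`. -/
def mm {V : Type} [DecidableEq V] (a b : V) : V → ℝ :=
  fun v => if v = a then 1/2 else if v = b then 1/2 else 0

/-- Clamp a real number to `[0,1]`. -/
def clamp (t : ℝ) : ℝ := min (max t 0) 1

lemma clamp_nonneg (t : ℝ) : 0 ≤ clamp t := le_min (le_max_right _ _) zero_le_one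

lemma clamp_le_one (t : ℝ) : clamp t ≤ 1 := min_le_right _ _

lemma clamp_of_nonpos {t : ℝ} (h : t ≤ 0) : clamp t = 0 := by
  rw [clamp, max_eq_right h, min_eq_left zero_le_one]

lemma clamp_of_one_le {t : ℝ} (h : 1 ≤ t) : clamp t = 1 := by
  rw [clamp, max_eq_left (zero_le_one.trans h), min_eq_right h]

lemma clamp_of_mem {t : ℝ} (h0 : 0 ≤ t) (h1 : t ≤ 1) : clamp t = t := by
  rw [clamp, max_eq_left h0, min_eq_left h1]

lemma continuous_clamp : Continuous clamp :=
  ((continuous_id.max continuous_const).min continuous_const)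

lemma sum_clamp (n : ℕ) (t : ℝ) (h0 : 0 ≤ t) (h1 : t ≤ n) :
    ∑ i ∈ Finset.range n, clamp (t - i) = t := by
  induction n with
  | zero =>
    simp only [Nat.cast_zero] at h1
    simp [le_antisymm h1 h0]
  | succ n ih =>
    rw [Finset.sum_range_succ]
    rcases le_or_gt t n with h | h
    · rw [ih h, clamp_of_nonpos (by linarith), add_zero]
    · have hone : ∀ i ∈ Finset.range n, clamp (t - i) = 1 := by
        intro i hi
        have : (i : ℝ) ≤ (n : ℝ) - 1 := by
          have := Finset.mem_range.mp hi
          have : (i : ℝ) + 1 ≤ (n : ℝ) := by exact_mod_cast this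
          linarith
        exact clamp_of_one_le (by linarith)
      rw [Finset.sum_congr rfl hone, Finset.sum_const, Finset.card_range, nsmul_eq_mul,
        mul_one, clamp_of_mem (by linarith) (by push_cast at h1 ⊢; linarith)]
      ring

/-- The data of a fan over a path in `lk_Y(a) ∩ lk_Y(b)`. -/
structure FanData (V : Type) [DecidableEq V] (Y : SComplex V) (a b : V) where
  k : ℕ
  w : ℕ → V
  hwa : ∀ i, i ≤ k → w i ≠ a
  hwb : ∀ i, i ≤ k → w i ≠ b
  hwinj : ∀ i, i ≤ k → ∀ j, j ≤ k → w i = w j → i = j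
  hfa : ∀ i, i < k → ({a, w i, w (i+1)} : Finset V) ∈ Y.faces
  hfb : ∀ i, i < k → ({b, w i, w (i+1)} : Finset V) ∈ Y.faces
  hlast : ({a, b, w k} : Finset V) ∈ Y.faces

namespace FanData

variable {V : Type} [DecidableEq V] [Fintype V] {Y : SComplex V} {a b : V}

/-- The nodes of the polygonal arc: the path vertices followed by the midpoint of `ab`. -/
def q (F : FanData V Y a b) (i : ℕ) : V → ℝ := if i ≤ F.k then ee (F.w i) else mm a b

/-- The polygonal arc through the nodes, parametrized on `[0, k+1]`. -/
def P (F : FanData V Y a b) (t : ℝ) : V → ℝ :=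
  F.q 0 + ∑ i ∈ Finset.range (F.k + 1), clamp (t - i) • (F.q (i+1) - F.q i)

/-- The arc parameter associated to a point of the diamond. -/
def u (F : FanData V Y a b) (z : ℝ × ℝ) : ℝ :=
  ((F.k : ℝ) + 1) * (z.1 + (1 - |z.2|)) / (2 * (1 - |z.2|))

/-- The join parametrization of the fan by the diamond. -/
def f (F : FanData V Y a b) (z : ℝ × ℝ) : V → ℝ :=
  (max z.2 0) • ee a + (max (-z.2) 0) • ee b + (1 - |z.2|) • F.P (F.u z)

/-- The progress linear functional. -/
def phi (F : FanData V Y a b) : (V → ℝ) →ₗ[ℝ] ℝ :=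
  (∑ i ∈ Finset.range (F.k + 1),
    (i : ℝ) • LinearMap.proj (R := ℝ) (φ := fun _ : V => ℝ) (F.w i)) +
  ((F.k : ℝ) + 1) • (LinearMap.proj (R := ℝ) (φ := fun _ : V => ℝ) a +
    LinearMap.proj (R := ℝ) (φ := fun _ : V => ℝ) b)

/-- The height-difference linear functional. -/
def psi (F : FanData V Y a b) : (V → ℝ) →ₗ[ℝ] ℝ :=
  LinearMap.proj (R := ℝ) (φ := fun _ : V => ℝ) a -
    LinearMap.proj (R := ℝ) (φ := fun _ : V => ℝ) b

lemma phi_apply (F : FanData V Y a b) (s : V → ℝ) :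
    F.phi s = (∑ i ∈ Finset.range (F.k + 1), (i : ℝ) * s (F.w i)) +
      ((F.k : ℝ) + 1) * (s a + s b) := by
  simp [phi, LinearMap.proj, smul_eq_mul, mul_add]

lemma psi_apply (F : FanData V Y a b) (s : V → ℝ) : F.psi s = s a - s b := by
  simp [psi, LinearMap.proj]

lemma ee_apply {v x : V} : ee v x = if x = v then 1 else 0 := rfl

lemma phi_ee_a (F : FanData V Y a b) (hab : a ≠ b) : F.phi (ee a) = (F.k : ℝ) + 1 := by
  rw [phi_apply]
  have h1 : ∀ i ∈ Finset.range (F.k + 1), (i : ℝ) * ee a (F.w i) = 0 := by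
    intro i hi
    rw [ee_apply, if_neg, mul_zero]
    intro h
    exact F.hwa i (Nat.lt_succ_iff.mp (Finset.mem_range.mp hi)) h
  rw [Finset.sum_congr rfl h1, Finset.sum_const, smul_zero]
  simp [ee_apply, if_neg (Ne.symm hab)]

lemma phi_ee_b (F : FanData V Y a b) (hab : a ≠ b) : F.phi (ee b) = (F.k : ℝ) + 1 := by
  rw [phi_apply]
  have h1 : ∀ i ∈ Finset.range (F.k + 1), (i : ℝ) * ee b (F.w i) = 0 := by
    intro i hi
    rw [ee_apply, if_neg, mul_zero]
    intro h
    exact F.hwb i (Nat.lt_succ_iff.mp (Finset.mem_range.mp hi)) h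
  rw [Finset.sum_congr rfl h1, Finset.sum_const, smul_zero]
  simp [ee_apply, if_neg hab]

lemma psi_ee_a (F : FanData V Y a b) (hab : a ≠ b) : F.psi (ee a) = 1 := by
  rw [psi_apply]; simp [ee_apply, if_neg (Ne.symm hab)]

lemma psi_ee_b (F : FanData V Y a b) (hab : a ≠ b) : F.psi (ee b) = -1 := by
  rw [psi_apply]; simp [ee_apply, if_neg hab]

lemma q_le (F : FanData V Y a b) {i : ℕ} (hi : i ≤ F.k) : F.q i = ee (F.w i) := if_pos hi

lemma q_top (F : FanData V Y a b) {i : ℕ} (hi : F.k < i) : F.q i = mm a b :=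
  if_neg (by omega)

lemma phi_q (F : FanData V Y a b) {i : ℕ} (hi : i ≤ F.k + 1) : F.phi (F.q i) = i := by
  rcases Nat.lt_or_ge i (F.k + 1) with h | h
  · have hik : i ≤ F.k := Nat.lt_succ_iff.mp h
    rw [F.q_le hik, phi_apply]
    have h1 : ∑ j ∈ Finset.range (F.k + 1), (j : ℝ) * ee (F.w i) (F.w j) = i := by
      rw [Finset.sum_eq_single i]
      · rw [ee_apply, if_pos rfl, mul_one]
      · intro j hj hne
        rw [ee_apply, if_neg, mul_zero]
        intro hw
        exact hne (F.hwinj j (Nat.lt_succ_iff.mp (Finset.mem_range.mp hj)) i hik hw)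
      · intro h'
        exact absurd (Finset.mem_range.mpr h) h'
    rw [h1, ee_apply, if_neg (fun h' => F.hwa i hik h'.symm),
      ee_apply, if_neg (fun h' => F.hwb i hik h'.symm)]
    ring
  · have hik : i = F.k + 1 := le_antisymm hi h
    subst hik
    rw [F.q_top (Nat.lt_succ_self _), phi_apply]
    have h1 : ∀ j ∈ Finset.range (F.k + 1), (j : ℝ) * mm a b (F.w j) = 0 := by
      intro j hj
      have hjk := Nat.lt_succ_iff.mp (Finset.mem_range.mp hj)
      rw [mm, if_neg (F.hwa j hjk), if_neg (F.hwb j hjk), mul_zero]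
    rw [Finset.sum_congr rfl h1, Finset.sum_const, smul_zero]
    have hma : mm a b a = 1/2 := if_pos rfl
    have hmb : mm a b b = 1/2 := by
      rw [mm]
      split_ifs with h1 h2
      · rfl
      · rfl
      · exact absurd rfl h2
    rw [hma, hmb]
    push_cast
    ring

lemma psi_q (F : FanData V Y a b) (hab : a ≠ b) (i : ℕ) : F.psi (F.q i) = 0 := by
  rcases le_or_gt i F.k with h | h
  · rw [F.q_le h, psi_apply, ee_apply, ee_apply,
      if_neg (fun h' => F.hwa i h h'.symm), if_neg (fun h' => F.hwb i h h'.symm)]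
    ring
  · rw [F.q_top h, psi_apply, mm, mm, if_pos rfl, if_neg hab.symm, if_pos rfl]
    ring

lemma map_P (F : FanData V Y a b) (L : (V → ℝ) →ₗ[ℝ] ℝ) (t : ℝ) :
    L (F.P t) = L (F.q 0) +
      ∑ i ∈ Finset.range (F.k + 1), clamp (t - i) * (L (F.q (i+1)) - L (F.q i)) := by
  rw [FanData.P, map_add, map_sum]
  congr 1
  refine Finset.sum_congr rfl fun i _ => ?_
  rw [LinearMap.map_smul, map_sub, smul_eq_mul]

lemma phi_P (F : FanData V Y a b) {t : ℝ} (h0 : 0 ≤ t) (h1 : t ≤ (F.k : ℝ) + 1) :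
    F.phi (F.P t) = t := by
  rw [map_P]
  have hq0 : F.phi (F.q 0) = 0 := by
    have := F.phi_q (i := 0) (by omega); simpa using this
  have hsum : ∀ i ∈ Finset.range (F.k + 1),
      clamp (t - i) * (F.phi (F.q (i+1)) - F.phi (F.q i)) = clamp (t - i) := by
    intro i hi
    have hik := Nat.lt_succ_iff.mp (Finset.mem_range.mp hi)
    rw [F.phi_q (by omega), F.phi_q (by omega)]
    push_cast
    ring
  rw [hq0, Finset.sum_congr rfl hsum, zero_add, sum_clamp _ _ h0 (by push_cast; exact h1)]

lemma psi_P (F : FanData V Y a b) (hab : a ≠ b) (t : ℝ) : F.psi (F.P t) = 0 := by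
  rw [map_P]
  simp [F.psi_q hab]

lemma psi_f (F : FanData V Y a b) (hab : a ≠ b) (z : ℝ × ℝ) : F.psi (F.f z) = z.2 := by
  rw [FanData.f, map_add, map_add, LinearMap.map_smul, LinearMap.map_smul,
    LinearMap.map_smul, F.psi_ee_a hab, F.psi_ee_b hab, F.psi_P hab]
  simp only [smul_eq_mul, mul_one, mul_neg, mul_zero, add_zero]
  rcases le_or_gt 0 z.2 with h | h
  · rw [max_eq_left h, max_eq_right (by linarith)]; ring
  · rw [max_eq_right h.le, max_eq_left (by linarith)]; ring

lemma abs_snd_le {z : ℝ × ℝ} (hz : z ∈ QQ) : |z.2| ≤ 1 :=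
  le_trans (le_add_of_nonneg_left (abs_nonneg _)) hz

lemma abs_fst_le {z : ℝ × ℝ} (hz : z ∈ QQ) : |z.1| ≤ 1 - |z.2| := by
  have : |z.1| + |z.2| ≤ 1 := hz
  linarith

lemma u_nonneg (F : FanData V Y a b) {z : ℝ × ℝ} (hz : z ∈ QQ) : 0 ≤ F.u z := by
  rcases eq_or_lt_of_le (abs_snd_le hz) with h | h
  · rw [FanData.u, ← h]; simp
  · apply div_nonneg
    · apply mul_nonneg (by positivity)
      have := abs_fst_le hz
      have := neg_abs_le z.1
      linarith
    · linarith

lemma u_le (F : FanData V Y a b) {z : ℝ × ℝ} (hz : z ∈ QQ) : F.u z ≤ (F.k : ℝ) + 1 := by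
  rcases eq_or_lt_of_le (abs_snd_le hz) with h | h
  · rw [FanData.u, ← h]; simp; positivity
  · rw [FanData.u, div_le_iff₀ (by linarith)]
    have h1 : z.1 ≤ 1 - |z.2| := le_trans (le_abs_self _) (abs_fst_le hz)
    nlinarith [Nat.cast_nonneg (α := ℝ) F.k]

lemma phi_f (F : FanData V Y a b) (hab : a ≠ b) {z : ℝ × ℝ} (hz : z ∈ QQ)
    (h : |z.2| < 1) :
    F.phi (F.f z) = ((F.k : ℝ) + 1) * |z.2| + (1 - |z.2|) * F.u z := by
  rw [FanData.f, map_add, map_add, LinearMap.map_smul, LinearMap.map_smul,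
    LinearMap.map_smul, F.phi_ee_a hab, F.phi_ee_b hab, F.phi_P (F.u_nonneg hz) (F.u_le hz)]
  simp only [smul_eq_mul]
  rcases le_or_gt 0 z.2 with h2 | h2
  · rw [max_eq_left h2, max_eq_right (by linarith), abs_of_nonneg h2]; ring
  · rw [max_eq_right h2.le, max_eq_left (by linarith), abs_of_neg h2]; ring

lemma f_injOn (F : FanData V Y a b) (hab : a ≠ b) : Set.InjOn F.f QQ := by
  intro z hz z' hz' heq
  have hy : z.2 = z'.2 := by
    have := congrArg F.psi heq
    rwa [F.psi_f hab, F.psi_f hab] at this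
  rcases eq_or_lt_of_le (abs_snd_le hz) with h | h
  · have h1 : z.1 = 0 := by
      have := abs_fst_le hz
      rw [← h] at this
      have := abs_nonneg z.1
      exact abs_eq_zero.mp (le_antisymm (by linarith) (abs_nonneg _))
    have h1' : z'.1 = 0 := by
      have h2 := abs_fst_le hz'
      rw [← hy, ← h] at h2
      exact abs_eq_zero.mp (le_antisymm (by linarith) (abs_nonneg _))
    exact Prod.ext (h1.trans h1'.symm) hy
  · have hphi := congrArg F.phi heq
    rw [F.phi_f hab hz h, F.phi_f hab hz' (hy ▸ h), ← hy] at hphi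
    have hu : F.u z = F.u z' := by
      have hne : (1 : ℝ) - |z.2| ≠ 0 := by linarith
      have h3 : (1 - |z.2|) * (F.u z - F.u z') = 0 := by linarith
      exact sub_eq_zero.mp ((mul_eq_zero.mp h3).resolve_left hne)
    rw [FanData.u, FanData.u, ← hy] at hu
    have hne2 : 2 * (1 - |z.2|) ≠ 0 := by linarith [abs_nonneg z.2]
    have hkne : ((F.k : ℝ) + 1) ≠ 0 := by positivity
    have : z.1 = z'.1 := by
      field_simp at hu
      linarith
    exact Prod.ext this hy

lemma continuous_P (F : FanData V Y a b) : Continuous F.P := by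
  apply continuous_const.add
  apply continuous_finset_sum
  intro i _
  exact (continuous_clamp.comp (continuous_id.sub continuous_const)).smul continuous_const

lemma continuousOn_f (F : FanData V Y a b) : ContinuousOn F.f QQ := by
  have hc1 : Continuous fun z : ℝ × ℝ => (max z.2 0) • ee a + (max (-z.2) 0) • ee b :=
    ((continuous_snd.max continuous_const).smul continuous_const).add
      (((continuous_snd.neg).max continuous_const).smul continuous_const)
  have key : ContinuousOn (fun z : ℝ × ℝ => (1 - |z.2|) • F.P (F.u z)) QQ := by
    obtain ⟨C, hC⟩ :=
      (isCompact_Icc (a := (0:ℝ)) (b := (F.k : ℝ) + 1)).exists_bound_of_continuousOn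
      F.continuous_P.continuousOn
    have hbound : ∀ z' ∈ QQ, ‖(1 - |z'.2|) • F.P (F.u z')‖ ≤ (1 - |z'.2|) * C := by
      intro z' hz'
      rw [norm_smul, Real.norm_eq_abs, abs_of_nonneg (by linarith [abs_snd_le hz'])]
      exact mul_le_mul_of_nonneg_left
        (hC _ ⟨F.u_nonneg hz', F.u_le hz'⟩) (by linarith [abs_snd_le hz'])
    intro z hz
    rcases eq_or_lt_of_le (abs_snd_le hz) with h | h
    · have hval : (1 - |z.2|) • F.P (F.u z) = 0 := by rw [← h]; simp
      rw [ContinuousWithinAt, hval]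
      apply squeeze_zero_norm' (a := fun z' : ℝ × ℝ => (1 - |z'.2|) * C)
      · filter_upwards [self_mem_nhdsWithin] with z' hz'
        exact hbound z' hz'
      · have hcont : Continuous fun z' : ℝ × ℝ => (1 - |z'.2|) * C :=
          (continuous_const.sub continuous_snd.abs).mul continuous_const
        have htd := (hcont.tendsto z).mono_left (nhdsWithin_le_nhds (s := QQ))
        rw [show (1 - |z.2|) * C = 0 by rw [← h]; ring] at htd
        exact htd
    · have : ContinuousAt (fun z : ℝ × ℝ => (1 - |z.2|) • F.P (F.u z)) z := by
        have hden : (2 * (1 - |z.2|)) ≠ 0 := ne_of_gt (by linarith)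
        have hu : ContinuousAt F.u z := by
          apply ContinuousAt.div
          · exact (continuous_const.mul
              (continuous_fst.add (continuous_const.sub continuous_snd.abs))).continuousAt
          · exact (continuous_const.mul (continuous_const.sub continuous_snd.abs)).continuousAt
          · exact hden
        exact ((continuous_const.sub continuous_snd.abs).continuousAt).smul
          (F.continuous_P.continuousAt.comp hu)
      exact this.continuousWithinAt
  exact (hc1.continuousOn).add key

lemma P_seg (F : FanData V Y a b) {j : ℕ} (hjk : j ≤ F.k) {t : ℝ}
    (h1 : (j : ℝ) ≤ t) (h2 : t ≤ (j : ℝ) + 1) :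
    F.P t = F.q j + (t - j) • (F.q (j+1) - F.q j) := by
  rw [FanData.P]
  have hsplit : ∑ i ∈ Finset.range (F.k + 1), clamp (t - i) • (F.q (i+1) - F.q i) =
      (∑ i ∈ Finset.range (j+1), clamp (t - i) • (F.q (i+1) - F.q i)) +
      ∑ i ∈ Finset.Ico (j+1) (F.k+1), clamp (t - i) • (F.q (i+1) - F.q i) :=
    (Finset.sum_range_add_sum_Ico _ (by omega)).symm
  have hico : ∑ i ∈ Finset.Ico (j+1) (F.k+1), clamp (t - i) • (F.q (i+1) - F.q i) = 0 := by
    apply Finset.sum_eq_zero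
    intro i hi
    have hji : j + 1 ≤ i := (Finset.mem_Ico.mp hi).1
    have : (j : ℝ) + 1 ≤ (i : ℝ) := by exact_mod_cast hji
    rw [clamp_of_nonpos (by linarith), zero_smul]
  have hlow : ∀ i ∈ Finset.range j, clamp (t - i) • (F.q (i+1) - F.q i) =
      F.q (i+1) - F.q i := by
    intro i hi
    have hij : i + 1 ≤ j := Finset.mem_range.mp hi
    have : (i : ℝ) + 1 ≤ (j : ℝ) := by exact_mod_cast hij
    rw [clamp_of_one_le (by linarith), one_smul]
  rw [hsplit, hico, add_zero, Finset.sum_range_succ, Finset.sum_congr rfl hlow,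
    Finset.sum_range_sub (fun i => F.q i), clamp_of_mem (by linarith) (by linarith)]
  abel

lemma P_zero (F : FanData V Y a b) : F.P 0 = ee (F.w 0) := by
  rw [FanData.P]
  have h : ∀ i ∈ Finset.range (F.k + 1), clamp ((0:ℝ) - i) • (F.q (i+1) - F.q i) = 0 := by
    intro i _
    rw [clamp_of_nonpos (by simp [Nat.cast_nonneg]), zero_smul]
  rw [Finset.sum_congr rfl h, Finset.sum_const, smul_zero, add_zero, F.q_le (Nat.zero_le _)]

lemma P_top (F : FanData V Y a b) : F.P ((F.k : ℝ) + 1) = mm a b := by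
  rw [F.P_seg (le_refl F.k) (by push_cast; linarith) (by push_cast; linarith)]
  rw [show ((F.k : ℝ) + 1 - F.k) = 1 by ring, one_smul, F.q_top (Nat.lt_succ_self _)]
  abel

lemma mem_real_of (s : Finset V) (hs : s ∈ Y.faces) (x : V → ℝ)
    (h1 : ∀ v, 0 ≤ x v) (h2 : ∀ v, v ∉ s → x v = 0) (h3 : ∑ v ∈ s, x v = 1) :
    x ∈ Y.realization := ⟨s, hs, h1, h2, h3⟩

lemma f_rep (F : FanData V Y a b) {z : ℝ × ℝ} (hz : z ∈ QQ) (h : |z.2| < 1) :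
    ∃ j : ℕ, j ≤ F.k ∧ ∃ θ : ℝ, 0 ≤ θ ∧ θ ≤ 1 ∧
      F.f z = (max z.2 0) • ee a + (max (-z.2) 0) • ee b +
        ((1 - |z.2|) * (1 - θ)) • F.q j + ((1 - |z.2|) * θ) • F.q (j+1) := by
  set u := F.u z with hu
  have hu0 : 0 ≤ u := F.u_nonneg hz
  have huk : u ≤ (F.k : ℝ) + 1 := F.u_le hz
  set j : ℕ := min ⌊u⌋₊ F.k with hj
  have hjk : j ≤ F.k := min_le_right _ _
  have hj0 : (j : ℝ) ≤ u := by
    refine le_trans ?_ (Nat.floor_le hu0)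
    exact_mod_cast Nat.cast_le.mpr (min_le_left _ _)
  have hj1 : u ≤ (j : ℝ) + 1 := by
    rcases le_or_gt ⌊u⌋₊ F.k with h' | h'
    · have : j = ⌊u⌋₊ := min_eq_left h'
      rw [this]
      exact (Nat.lt_floor_add_one u).le
    · have : j = F.k := min_eq_right h'.le
      rw [this]
      exact huk
  refine ⟨j, hjk, u - j, by linarith, by linarith, ?_⟩
  rw [FanData.f, ← hu, F.P_seg hjk hj0 hj1]
  module

lemma ee_mem_real {v0 : V} (hs : ({v0} : Finset V) ∈ Y.faces) : ee v0 ∈ Y.realization := by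
  refine ⟨{v0}, hs, fun v => ?_, fun v hv => ?_, ?_⟩
  · rw [ee_apply]; split <;> norm_num
  · rw [Finset.mem_singleton] at hv
    rw [ee_apply, if_neg hv]
  · rw [Finset.sum_singleton, ee_apply, if_pos rfl]

lemma face_a (F : FanData V Y a b) : ({a} : Finset V) ∈ Y.faces := by
  refine Y.down_closed _ F.hlast {a} ?_ ⟨a, Finset.mem_singleton_self a⟩
  intro x hx
  rw [Finset.mem_singleton] at hx
  subst hx
  exact Finset.mem_insert_self _ _

lemma face_b (F : FanData V Y a b) : ({b} : Finset V) ∈ Y.faces := by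
  refine Y.down_closed _ F.hlast {b} ?_ ⟨b, Finset.mem_singleton_self b⟩
  intro x hx
  rw [Finset.mem_singleton] at hx
  subst hx
  simp

lemma f_pole_pos (F : FanData V Y a b) {z : ℝ × ℝ} (h : z.2 = 1) : F.f z = ee a := by
  rw [FanData.f, h]
  norm_num

lemma f_pole_neg (F : FanData V Y a b) {z : ℝ × ℝ} (h : z.2 = -1) : F.f z = ee b := by
  rw [FanData.f, h]
  norm_num

lemma max_add_max_neg (y : ℝ) : max y 0 + max (-y) 0 = |y| := by
  rcases le_or_gt 0 y with h | h
  · rw [max_eq_left h, max_eq_right (by linarith), abs_of_nonneg h]; ring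
  · rw [max_eq_right h.le, max_eq_left (by linarith), abs_of_neg h]; ring

lemma f_mem (F : FanData V Y a b) (hab : a ≠ b) {z : ℝ × ℝ} (hz : z ∈ QQ) :
    F.f z ∈ Y.realization := by
  rcases eq_or_lt_of_le (abs_snd_le hz) with h | h
  · rcases abs_eq (by norm_num : (0:ℝ) ≤ 1) |>.mp h with h1 | h1
    · rw [F.f_pole_pos h1]; exact ee_mem_real F.face_a
    · rw [F.f_pole_neg h1]; exact ee_mem_real F.face_b
  · obtain ⟨j, hjk, θ, hθ0, hθ1, hrep⟩ := F.f_rep hz h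
    set c1 := max z.2 0 with hc1def
    set c2 := max (-z.2) 0 with hc2def
    set c3 := (1 - |z.2|) * (1 - θ) with hc3def
    set c4 := (1 - |z.2|) * θ with hc4def
    have hc1 : 0 ≤ c1 := le_max_right _ _
    have hc2 : 0 ≤ c2 := le_max_right _ _
    have hc3 : 0 ≤ c3 := mul_nonneg (by linarith) (by linarith)
    have hc4 : 0 ≤ c4 := mul_nonneg (by linarith) (by linarith)
    rcases lt_or_eq_of_le hjk with hjlt | hjeq
    · -- interior segment: both endpoints are path vertices
      have hq1 : F.q j = ee (F.w j) := F.q_le hjk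
      have hq2 : F.q (j+1) = ee (F.w (j+1)) := F.q_le hjlt
      have hval : ∀ v, F.f z v = (if v = a then c1 else 0) + (if v = b then c2 else 0) +
          (if v = F.w j then c3 else 0) + (if v = F.w (j+1) then c4 else 0) := by
        intro v
        rw [hrep, hq1, hq2]
        simp only [Pi.add_apply, Pi.smul_apply, smul_eq_mul, ee_apply, mul_ite,
          mul_one, mul_zero]
      have hwj1 : j + 1 ≤ F.k := hjlt
      have hane : a ≠ F.w j := fun h' => F.hwa j hjk h'.symm
      have hane1 : a ≠ F.w (j+1) := fun h' => F.hwa (j+1) hwj1 h'.symm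
      have hbne : b ≠ F.w j := fun h' => F.hwb j hjk h'.symm
      have hbne1 : b ≠ F.w (j+1) := fun h' => F.hwb (j+1) hwj1 h'.symm
      have hwne : F.w j ≠ F.w (j+1) := fun h' => by
        have := F.hwinj j hjk (j+1) hwj1 h'
        omega
      rcases le_or_gt 0 z.2 with hy | hy
      · have hmax : c2 = 0 := max_eq_right (by linarith)
        refine mem_real_of {a, F.w j, F.w (j+1)} (F.hfa j hjlt) _ (fun v => ?_)
          (fun v hv => ?_) ?_
        · rw [hval v]; split_ifs <;> linarith
        · simp only [Finset.mem_insert, Finset.mem_singleton, not_or] at hv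
          obtain ⟨hv1, hv2, hv3⟩ := hv
          rw [hval v, if_neg hv1, if_neg hv2, if_neg hv3, hmax]
          split_ifs <;> ring
        · rw [Finset.sum_insert (by simp [hane, hane1]),
            Finset.sum_insert (by simp [hwne]), Finset.sum_singleton]
          rw [hval a, hval (F.w j), hval (F.w (j+1))]
          rw [if_pos rfl, if_neg hab, if_neg hane, if_neg hane1,
            if_neg (Ne.symm hane), if_neg (Ne.symm hbne), if_pos rfl, if_neg hwne,
            if_neg (Ne.symm hane1), if_neg (Ne.symm hbne1), if_neg (Ne.symm hwne), if_pos rfl]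
          rw [hc1def, hc3def, hc4def, max_eq_left hy, abs_of_nonneg hy]
          ring
      · have hmax : c1 = 0 := max_eq_right (by linarith)
        refine mem_real_of {b, F.w j, F.w (j+1)} (F.hfb j hjlt) _ (fun v => ?_)
          (fun v hv => ?_) ?_
        · rw [hval v]; split_ifs <;> linarith
        · simp only [Finset.mem_insert, Finset.mem_singleton, not_or] at hv
          obtain ⟨hv1, hv2, hv3⟩ := hv
          rw [hval v, if_neg hv1, if_neg hv2, if_neg hv3, hmax]
          split_ifs <;> ring
        · rw [Finset.sum_insert (by simp [hbne, hbne1]),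
            Finset.sum_insert (by simp [hwne]), Finset.sum_singleton]
          rw [hval b, hval (F.w j), hval (F.w (j+1))]
          rw [if_neg (Ne.symm hab), if_pos rfl, if_neg hbne, if_neg hbne1,
            if_neg (Ne.symm hane), if_neg (Ne.symm hbne), if_pos rfl, if_neg hwne,
            if_neg (Ne.symm hane1), if_neg (Ne.symm hbne1), if_neg (Ne.symm hwne), if_pos rfl]
          rw [hc2def, hc3def, hc4def, max_eq_left (by linarith : 0 ≤ -z.2), abs_of_neg hy]
          ring
    · -- last segment: from `w k` to the midpoint of `ab`
      have hq1 : F.q j = ee (F.w j) := F.q_le hjk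
      have hq2 : F.q (j+1) = mm a b := F.q_top (by omega)
      have hane : a ≠ F.w j := fun h' => F.hwa j hjk h'.symm
      have hbne : b ≠ F.w j := fun h' => F.hwb j hjk h'.symm
      have hface : ({a, b, F.w j} : Finset V) ∈ Y.faces := by rw [hjeq]; exact F.hlast
      have hval : ∀ v, F.f z v = (if v = a then c1 else 0) + (if v = b then c2 else 0) +
          (if v = F.w j then c3 else 0) +
          (if v = a then c4 * (1/2) else if v = b then c4 * (1/2) else 0) := by
        intro v
        rw [hrep, hq1, hq2]
        simp only [Pi.add_apply, Pi.smul_apply, smul_eq_mul, ee_apply, mm, mul_ite,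
          mul_one, mul_zero]
      refine mem_real_of {a, b, F.w j} hface _ (fun v => ?_) (fun v hv => ?_) ?_
      · rw [hval v]; split_ifs <;> linarith
      · simp only [Finset.mem_insert, Finset.mem_singleton, not_or] at hv
        obtain ⟨hv1, hv2, hv3⟩ := hv
        rw [hval v, if_neg hv1, if_neg hv2, if_neg hv3, if_neg hv1, if_neg hv2]
        ring
      · rw [Finset.sum_insert (by simp [hab, hane]),
          Finset.sum_insert (by simp [hbne]), Finset.sum_singleton]
        rw [hval a, hval b, hval (F.w j)]
        rw [if_pos rfl, if_neg hab, if_neg hane, if_pos rfl,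
          if_neg (Ne.symm hab), if_pos rfl, if_neg hbne, if_neg (Ne.symm hab), if_pos rfl,
          if_neg (Ne.symm hane), if_neg (Ne.symm hbne), if_pos rfl, if_neg (Ne.symm hane),
          if_neg (Ne.symm hbne)]
        have : c1 + c2 = |z.2| := max_add_max_neg z.2
        rw [hc3def, hc4def]
        nlinarith [this]

lemma u_left (F : FanData V Y a b) {z : ℝ × ℝ} (hx : z.1 = -(1 - |z.2|)) : F.u z = 0 := by
  rw [FanData.u, hx]
  simp

lemma u_right (F : FanData V Y a b) {z : ℝ × ℝ} (h : |z.2| < 1) (hx : z.1 = 1 - |z.2|) :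
    F.u z = (F.k : ℝ) + 1 := by
  have hne : (1 : ℝ) - |z.2| ≠ 0 := by linarith
  rw [FanData.u, hx, show ((1 - |z.2|) + (1 - |z.2|)) = 2 * (1 - |z.2|) by ring,
    mul_div_assoc, div_self (by intro h'; apply hne; linarith), mul_one]

lemma f_left_val (F : FanData V Y a b) {z : ℝ × ℝ} (hx : z.1 = -(1 - |z.2|)) :
    F.f z = (max z.2 0) • ee a + (max (-z.2) 0) • ee b + (1 - |z.2|) • ee (F.w 0) := by
  rw [FanData.f, F.u_left hx, F.P_zero]

lemma f_right_val (F : FanData V Y a b) {z : ℝ × ℝ} (h : |z.2| < 1)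
    (hx : z.1 = 1 - |z.2|) :
    F.f z = (max z.2 0) • ee a + (max (-z.2) 0) • ee b + (1 - |z.2|) • mm a b := by
  rw [FanData.f, F.u_right h hx, F.P_top]

lemma pole_mix (hab : a ≠ b) (y : ℝ) :
    (max y 0) • ee a + (max (-y) 0) • ee b + (1 - |y|) • mm a b =
      ((1 + y)/2) • ee a + ((1 - y)/2) • ee b := by
  funext v
  simp only [Pi.add_apply, Pi.smul_apply, smul_eq_mul, ee_apply, mm, mul_ite, mul_one,
    mul_zero]
  rcases le_or_gt 0 y with h | h
  · rw [max_eq_left h, max_eq_right (by linarith), abs_of_nonneg h]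
    split_ifs <;> try ring
    all_goals (rename_i hva hvb; exact absurd (hva.symm.trans hvb) hab)
  · rw [max_eq_right h.le, max_eq_left (by linarith), abs_of_neg h]
    split_ifs <;> try ring
    all_goals (rename_i hva hvb; exact absurd (hva.symm.trans hvb) hab)

lemma f_boundary (F : FanData V Y a b) (hab : a ≠ b) :
    F.f '' {z | z ∈ QQ ∧ n1 z = 1} = triangleSet a b (F.w 0) := by
  have htri : triangleSet a b (F.w 0) = segment ℝ (ee a) (ee b) ∪
      segment ℝ (ee b) (ee (F.w 0)) ∪ segment ℝ (ee a) (ee (F.w 0)) := rfl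
  rw [htri]
  ext p
  constructor
  · rintro ⟨z, ⟨hzQ, hzB⟩, rfl⟩
    rcases eq_or_lt_of_le (abs_snd_le hzQ) with h | h
    · rcases (abs_eq (by norm_num : (0:ℝ) ≤ 1)).mp h with h1 | h1
      · rw [F.f_pole_pos h1]
        exact Or.inl (Or.inl (left_mem_segment ℝ _ _))
      · rw [F.f_pole_neg h1]
        exact Or.inl (Or.inl (right_mem_segment ℝ _ _))
    · have hzB' : |z.1| = 1 - |z.2| := by
        have : |z.1| + |z.2| = 1 := hzB
        linarith
      rcases (abs_eq (by linarith : (0:ℝ) ≤ 1 - |z.2|)).mp hzB' with hx | hx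
      · -- right edge: into the segment `[ee a, ee b]`
        rw [F.f_right_val h hx, pole_mix hab]
        refine Or.inl (Or.inl ⟨(1 + z.2)/2, (1 - z.2)/2, ?_, ?_, by ring, rfl⟩)
        · have := neg_abs_le z.2; linarith
        · have := le_abs_self z.2; linarith
      · -- left edge: into a segment ending at `ee (w 0)`
        rw [F.f_left_val hx]
        rcases le_or_gt 0 z.2 with hy | hy
        · refine Or.inr ⟨z.2, 1 - z.2, hy, by linarith [le_abs_self z.2], by ring, ?_⟩
          rw [max_eq_left hy, max_eq_right (by linarith), abs_of_nonneg hy]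
          module
        · refine Or.inl (Or.inr ⟨-z.2, 1 + z.2, by linarith, by linarith [neg_abs_le z.2],
            by ring, ?_⟩)
          rw [max_eq_right hy.le, max_eq_left (by linarith), abs_of_neg hy]
          module
  · rintro ((⟨α, β, hα, hβ, hs, rfl⟩ | ⟨α, β, hα, hβ, hs, rfl⟩) | ⟨α, β, hα, hβ, hs, rfl⟩)
    · -- segment `[ee a, ee b]`
      rcases le_total β α with hba | hba
      · refine ⟨(2*β, α - β), ⟨?_, ?_⟩, ?_⟩
        · show |2*β| + |α - β| ≤ 1
          rw [abs_of_nonneg (by linarith), abs_of_nonneg (by linarith)]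
          linarith
        · show |2*β| + |α - β| = 1
          rw [abs_of_nonneg (by linarith), abs_of_nonneg (by linarith)]
          linarith
        · have habs : |α - β| = α - β := abs_of_nonneg (by linarith)
          rcases eq_or_lt_of_le (show α - β ≤ 1 by linarith) with h1 | h1
          · have hβ0 : β = 0 := by linarith
            have hα1 : α = 1 := by linarith
            rw [F.f_pole_pos (by exact h1), hβ0, hα1]
            module
          · rw [F.f_right_val (by rw [habs]; exact h1)
              (by show 2*β = 1 - |α - β|; rw [habs]; linarith), pole_mix hab]
            rw [show (1 + (α - β))/2 = α by linarith, show (1 - (α - β))/2 = β by linarith]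
      · refine ⟨(2*α, α - β), ⟨?_, ?_⟩, ?_⟩
        · show |2*α| + |α - β| ≤ 1
          rw [abs_of_nonneg (by linarith), abs_of_nonpos (by linarith)]
          linarith
        · show |2*α| + |α - β| = 1
          rw [abs_of_nonneg (by linarith), abs_of_nonpos (by linarith)]
          linarith
        · have habs : |α - β| = -(α - β) := abs_of_nonpos (by linarith)
          rcases eq_or_lt_of_le (show -(α - β) ≤ 1 by linarith) with h1 | h1
          · have hα0 : α = 0 := by linarith
            have hβ1 : β = 1 := by linarith
            rw [F.f_pole_neg (by show α - β = -1; linarith), hα0, hβ1]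
            module
          · rw [F.f_right_val (by rw [habs]; exact h1)
              (by show 2*α = 1 - |α - β|; rw [habs]; linarith), pole_mix hab]
            rw [show (1 + (α - β))/2 = α by linarith, show (1 - (α - β))/2 = β by linarith]
    · -- segment `[ee b, ee (w 0)]`
      refine ⟨(-β, -α), ⟨?_, ?_⟩, ?_⟩
      · show |(-β)| + |(-α)| ≤ 1
        rw [abs_neg, abs_neg, abs_of_nonneg hβ, abs_of_nonneg hα]
        linarith
      · show |(-β)| + |(-α)| = 1
        rw [abs_neg, abs_neg, abs_of_nonneg hβ, abs_of_nonneg hα]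
        linarith
      · rcases eq_or_lt_of_le (show α ≤ 1 by linarith) with h1 | h1
        · have hβ0 : β = 0 := by linarith
          rw [F.f_pole_neg (by show -α = -1; rw [h1]), hβ0, h1]
          module
        · rw [F.f_left_val (by show -β = -(1 - |(-α)|); rw [abs_neg, abs_of_nonneg hα]; linarith)]
          rw [show ((-β, -α) : ℝ × ℝ).2 = -α from rfl, abs_neg, abs_of_nonneg hα,
            max_eq_right (by linarith), max_eq_left (by linarith), neg_neg,
            show 1 - α = β by linarith]
          module
    · -- segment `[ee a, ee (w 0)]`
      refine ⟨(-β, α), ⟨?_, ?_⟩, ?_⟩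
      · show |(-β)| + |α| ≤ 1
        rw [abs_neg, abs_of_nonneg hβ, abs_of_nonneg hα]
        linarith
      · show |(-β)| + |α| = 1
        rw [abs_neg, abs_of_nonneg hβ, abs_of_nonneg hα]
        linarith
      · rcases eq_or_lt_of_le (show α ≤ 1 by linarith) with h1 | h1
        · have hβ0 : β = 0 := by linarith
          rw [F.f_pole_pos (by exact h1), hβ0, h1]
          module
        · rw [F.f_left_val (by show -β = -(1 - |α|); rw [abs_of_nonneg hα]; linarith)]
          rw [show ((-β, α) : ℝ × ℝ).2 = α from rfl, abs_of_nonneg hα,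
            max_eq_left (by linarith), max_eq_right (by linarith),
            show 1 - α = β by linarith]
          module

theorem master (F : FanData V Y a b) (hab : a ≠ b) :
    ∃ K : Set (V → ℝ), K ⊆ Y.realization ∧ triangleSet a b (F.w 0) ⊆ K ∧
      ∃ h : K ≃ₜ unitDisk,
        Subtype.val '' (⇑h ⁻¹' {y : unitDisk | (y : ℝ × ℝ) ∈ unitCircle}) =
          triangleSet a b (F.w 0) := by
  refine ⟨F.f '' QQ, ?_, ?_, ?_⟩
  · rintro x ⟨z, hz, rfl⟩
    exact F.f_mem hab hz
  · rw [← F.f_boundary hab]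
    exact Set.image_mono (fun z hz => hz.1)
  · have hKey : Function.Bijective
        (fun z : QQ => (⟨F.f z.1, Set.mem_image_of_mem _ z.2⟩ : F.f '' QQ)) := by
      constructor
      · intro z z' hzz
        exact Subtype.ext (F.f_injOn hab z.2 z'.2 (congrArg Subtype.val hzz))
      · rintro ⟨x, z, hz, rfl⟩
        exact ⟨⟨z, hz⟩, rfl⟩
    set eK : QQ ≃ (F.f '' QQ : Set (V → ℝ)) := Equiv.ofBijective _ hKey with heK
    have hcont : Continuous ⇑eK :=
      (F.continuousOn_f.restrict).subtype_mk _
    set fH : QQ ≃ₜ (F.f '' QQ : Set (V → ℝ)) :=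
      Continuous.homeoOfEquivCompactToT2 (f := eK) hcont with hfH
    refine ⟨fH.symm.trans hQD, ?_⟩
    rw [← F.f_boundary hab]
    ext x
    constructor
    · rintro ⟨p, hp, rfl⟩
      set z := fH.symm p with hzdef
      have hpz : fH z = p := fH.apply_symm_apply p
      have hp' : (hQD z : ℝ × ℝ) ∈ unitCircle := hp
      have hz1 := (hQD_circle z).mp hp'
      refine ⟨z.1, ⟨z.2, hz1⟩, ?_⟩
      rw [← hpz]
      rfl
    · rintro ⟨z, ⟨hzQ, hzB⟩, rfl⟩
      refine ⟨fH ⟨z, hzQ⟩, ?_, rfl⟩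
      show (hQD (fH.symm (fH ⟨z, hzQ⟩)) : ℝ × ℝ) ∈ unitCircle
      rw [fH.symm_apply_apply]
      exact (hQD_circle ⟨z, hzQ⟩).mpr hzB

end FanData

lemma ite_comm_eq {α : Type} [DecidableEq α] {p q : α} {r s : ℝ} :
    (if p = q then r else s) = if q = p then r else s := by
  rcases eq_or_ne p q with h | h
  · rw [if_pos h, if_pos h.symm]
  · rw [if_neg h, if_neg (Ne.symm h)]

lemma ee_apply' {V : Type} [DecidableEq V] {v x : V} :
    TCB.ee v x = if v = x then (1:ℝ) else 0 := by
  rw [show TCB.ee v x = if x = v then (1:ℝ) else 0 from rfl]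
  exact ite_comm_eq

lemma affine_mem_triangle {V : Type} [DecidableEq V] [Fintype V] {Y : SComplex V}
    (γ : SMap (cycleC 3) Y) (a b cc : V) (h0 : γ.toFun 0 = a) (h1 : γ.toFun 1 = b)
    (h2 : γ.toFun 2 = cc) (x : ZMod 3 → ℝ) (hx : x ∈ (cycleC 3).realization) :
    SComplex.affineExtend γ.toFun x ∈ triangleSet a b cc := by
  obtain ⟨s, hs, hnn, hsupp, hsum⟩ := hx
  have hAE : ∀ ww, SComplex.affineExtend γ.toFun x ww =
      (if γ.toFun 0 = ww then x 0 else 0) + (if γ.toFun 1 = ww then x 1 else 0) +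
      (if γ.toFun 2 = ww then x 2 else 0) := by
    intro ww
    rw [SComplex.affineExtend, Finset.sum_filter,
      show (Finset.univ : Finset (ZMod 3)) = {0, 1, 2} from by decide,
      Finset.sum_insert (by decide), Finset.sum_insert (by decide), Finset.sum_singleton]
    ring
  have htri : triangleSet a b cc = segment ℝ (TCB.ee a) (TCB.ee b) ∪
      segment ℝ (TCB.ee b) (TCB.ee cc) ∪ segment ℝ (TCB.ee a) (TCB.ee cc) := rfl
  rw [htri]
  have h3 : ∀ m : ZMod 3, m = 0 ∨ m = 1 ∨ m = 2 := by decide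
  rcases hs with ⟨i, rfl⟩ | ⟨i, rfl⟩
  · -- a vertex of the cycle
    have hx1 : x i = 1 := by simpa using hsum
    have hv : ∀ jj, jj ≠ i → x jj = 0 := fun jj hjj => hsupp jj (by simp [hjj])
    rcases h3 i with rfl | rfl | rfl
    · refine Or.inl (Or.inl ?_)
      have : SComplex.affineExtend γ.toFun x = TCB.ee a := by
        funext ww
        rw [hAE ww, h0, hv 1 (by decide), hv 2 (by decide), hx1, ite_self, ite_self,
          add_zero, add_zero, ee_apply']
      rw [this]
      exact left_mem_segment ℝ _ _
    · refine Or.inl (Or.inl ?_)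
      have : SComplex.affineExtend γ.toFun x = TCB.ee b := by
        funext ww
        rw [hAE ww, h1, hv 0 (by decide), hv 2 (by decide), hx1, ite_self, ite_self,
          add_zero, zero_add, ee_apply']
      rw [this]
      exact right_mem_segment ℝ _ _
    · refine Or.inr ?_
      have : SComplex.affineExtend γ.toFun x = TCB.ee cc := by
        funext ww
        rw [hAE ww, h2, hv 0 (by decide), hv 1 (by decide), hx1, ite_self, ite_self,
          zero_add, zero_add, ee_apply']
      rw [this]
      exact right_mem_segment ℝ _ _
  · -- an edge of the cycle
    rcases h3 i with rfl | rfl | rfl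
    · rw [show ((0 : ZMod 3) + 1) = 1 from by decide] at hsum hsupp
      have hsum2 : x 0 + x 1 = 1 := by
        rw [Finset.sum_pair (by decide : (0 : ZMod 3) ≠ 1)] at hsum
        exact hsum
      have hx2 : x 2 = 0 := hsupp 2 (by decide)
      refine Or.inl (Or.inl ⟨x 0, x 1, hnn 0, hnn 1, hsum2, ?_⟩)
      funext ww
      rw [Pi.add_apply, Pi.smul_apply, Pi.smul_apply, smul_eq_mul, smul_eq_mul,
        hAE ww, h0, h1, hx2, ite_self, add_zero, ee_apply', ee_apply']
      simp only [mul_ite, mul_one, mul_zero]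
    · rw [show ((1 : ZMod 3) + 1) = 2 from by decide] at hsum hsupp
      have hsum2 : x 1 + x 2 = 1 := by
        rw [Finset.sum_pair (by decide : (1 : ZMod 3) ≠ 2)] at hsum
        exact hsum
      have hx0 : x 0 = 0 := hsupp 0 (by decide)
      refine Or.inl (Or.inr ⟨x 1, x 2, hnn 1, hnn 2, hsum2, ?_⟩)
      funext ww
      rw [Pi.add_apply, Pi.smul_apply, Pi.smul_apply, smul_eq_mul, smul_eq_mul,
        hAE ww, h1, h2, hx0, ite_self, zero_add, ee_apply', ee_apply']
      simp only [mul_ite, mul_one, mul_zero]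
    · rw [show ((2 : ZMod 3) + 1) = 0 from by decide] at hsum hsupp
      have hsum2 : x 2 + x 0 = 1 := by
        rw [Finset.sum_pair (by decide : (2 : ZMod 3) ≠ 0)] at hsum
        exact hsum
      have hx1 : x 1 = 0 := hsupp 1 (by decide)
      refine Or.inr ⟨x 0, x 2, hnn 0, hnn 2, by linarith, ?_⟩
      funext ww
      rw [Pi.add_apply, Pi.smul_apply, Pi.smul_apply, smul_eq_mul, smul_eq_mul,
        hAE ww, h0, h2, hx1, ite_self, add_zero, ee_apply', ee_apply']
      simp only [mul_ite, mul_one, mul_zero]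


end TCB

end TCBaux

/-- If `lk_Y(a) ∩ lk_Y(b)` is connected and `{a,b,d}` is a
2-face of `Y` for some `d`, then for any vertex `c` of `lk_Y(a) ∩ lk_Y(b)` the
3-cycle with edges `{a,b}`, `{a,c}`, `{b,c}` bounds an embedded disk in `Y`; in
particular this 3-cycle is null-homotopic in `Y`. -/
theorem three_cycle_bounds_disk
    (V : Type) [DecidableEq V] [Fintype V] (Y : SComplex V) (hdim : Y.dim2)
    (a b : V) (hab : a ≠ b)
    (hconn : (linkInter Y a b).Connected)
    (hd : ∃ d : V, ({a, b, d} : Finset V) ∈ Y.faces ∧ ({a, b, d} : Finset V).card = 3)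
    (c : LinkVerts Y a b) :
    BoundsEmbeddedDisk Y a b c.1 ∧
      ∀ γ : SMap (cycleC 3) Y,
        γ.toFun 0 = a → γ.toFun 1 = b → γ.toFun 2 = c.1 →
        (SMap.realize γ).Nullhomotopic := by
  classical
  obtain ⟨d, hdf, hdcard⟩ := hd
  have hda : d ≠ a := by
    rintro rfl
    have he : ({d, b, d} : Finset V) = ({d, b} : Finset V) := by
      ext x; simp [or_comm]
    rw [he] at hdcard
    have h2 : ({d, b} : Finset V).card ≤ 2 :=
      (Finset.card_insert_le _ _).trans (by simp)
    omega
  have hdb : d ≠ b := by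
    rintro rfl
    have he : ({a, d, d} : Finset V) = ({a, d} : Finset V) := by
      ext x; simp [or_comm, or_assoc]
    rw [he] at hdcard
    have h2 : ({a, d} : Finset V).card ≤ 2 :=
      (Finset.card_insert_le _ _).trans (by simp)
    omega
  have hfad : ({a, d} : Finset V) ∈ Y.faces := by
    refine Y.down_closed _ hdf {a, d} ?_ ⟨a, by simp⟩
    intro x hx
    simp only [Finset.mem_insert, Finset.mem_singleton] at hx ⊢
    tauto
  have hfbd : ({b, d} : Finset V) ∈ Y.faces := by
    refine Y.down_closed _ hdf {b, d} ?_ ⟨b, by simp⟩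
    intro x hx
    simp only [Finset.mem_insert, Finset.mem_singleton] at hx ⊢
    tauto
  set dL : LinkVerts Y a b := ⟨d, hda, hdb, hfad, hfbd⟩ with hdL
  obtain ⟨p0⟩ := hconn.preconnected c dL
  obtain ⟨W, hWp⟩ := p0.toPath
  have hne : W.support ≠ [] := W.support_ne_nil
  have hlen : 1 ≤ W.support.length := List.length_pos_iff.mpr hne
  have hnd : W.support.Nodup := hWp.support_nodup
  set F : TCB.FanData V Y a b :=
    { k := W.support.length - 1
      w := fun i => (W.support.getD i dL).1
      hwa := fun i _ => (W.support.getD i dL).2.1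
      hwb := fun i _ => (W.support.getD i dL).2.2.1
      hwinj := by
        intro i hi j hj hw
        have h1 : W.support.getD i dL = W.support.getD j dL := Subtype.ext hw
        rw [List.getD_eq_getElem _ _ (show i < W.support.length by omega),
          List.getD_eq_getElem _ _ (show j < W.support.length by omega)] at h1
        exact (List.Nodup.getElem_inj_iff hnd).mp h1
      hfa := by
        intro i hi
        have hch := List.isChain_iff_getElem.mp W.isChain_adj_support i (by omega)
        obtain ⟨h1, h2, h3⟩ := hch
        show ({a, (W.support.getD i dL).1, (W.support.getD (i+1) dL).1} : Finset V) ∈ Y.faces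
        rw [List.getD_eq_getElem _ _ (show i < W.support.length by omega),
          List.getD_eq_getElem _ _ (show i + 1 < W.support.length by omega)]
        exact h2
      hfb := by
        intro i hi
        have hch := List.isChain_iff_getElem.mp W.isChain_adj_support i (by omega)
        obtain ⟨h1, h2, h3⟩ := hch
        show ({b, (W.support.getD i dL).1, (W.support.getD (i+1) dL).1} : Finset V) ∈ Y.faces
        rw [List.getD_eq_getElem _ _ (show i < W.support.length by omega),
          List.getD_eq_getElem _ _ (show i + 1 < W.support.length by omega)]
        exact h3
      hlast := by
        have h2 : W.support[W.support.length - 1]'(by omega) = dL := by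
          rw [← List.getLast_eq_getElem hne]
          exact W.getLast_support
        show ({a, b, (W.support.getD (W.support.length - 1) dL).1} : Finset V) ∈ Y.faces
        rw [List.getD_eq_getElem _ _ (show W.support.length - 1 < W.support.length by omega), h2]
        exact hdf } with hF
  have hFw0 : F.w 0 = c.1 := by
    rw [hF]
    show (W.support.getD 0 dL).1 = c.1
    rw [W.support_eq_cons]
    rfl
  obtain ⟨K, hKsub, hKtri, hHomeo, hBd⟩ := F.master hab
  rw [hFw0] at hKtri hBd
  refine ⟨⟨K, hKsub, hHomeo, hBd⟩, ?_⟩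
  intro γ hg0 hg1 hg2
  have hcontr : ContractibleSpace ↥K := by
    have hud : ContractibleSpace ↥unitDisk :=
      (convex_closedBall (0 : ℝ × ℝ) 1).contractibleSpace
        ⟨0, Metric.mem_closedBall_self (by norm_num)⟩
    exact hHomeo.contractibleSpace
  set gK : C((cycleC 3).realization, K) :=
    ⟨fun x => ⟨SComplex.affineExtend γ.toFun x.1,
        hKtri (TCB.affine_mem_triangle γ a b c.1 hg0 hg1 hg2 x.1 x.2)⟩,
      ((SComplex.continuous_affineExtend γ.toFun).comp continuous_subtype_val).subtype_mk _⟩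
    with hgK
  set incl : C(K, Y.realization) := ⟨Set.inclusion hKsub, continuous_inclusion hKsub⟩
    with hincl
  have heq : SMap.realize γ = incl.comp gK := by
    ext x
    rfl
  rw [heq]
  have h1 : (ContinuousMap.id ↥K).Nullhomotopic := id_nullhomotopic _
  have h2 := h1.comp_left gK
  rw [ContinuousMap.id_comp] at h2
  exact h2.comp_right incl
end

section
/- For every m ∈ ℤ⁺, every ε > 0, and every p = O(n^{-1/2 - ε}), the Linial–Meshulam random 2-complex Y(n,p) is asymptotically almost surely (ε, m, 3)-sparse. -/
open Finset MeasureTheory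
open scoped ENNReal

section AuxLemmas

open Finset

lemma fcount_eq_card {Z : SComplex ℕ} (h : Z.faces.Finite) (i : ℕ) :
    Z.fcount i = (h.toFinset.filter (fun s => s.card = i + 1)).card := by
  classical
  have e : {s : Finset ℕ // s ∈ Z.faces ∧ s.card = i + 1}
      ≃ {s : Finset ℕ // s ∈ h.toFinset.filter (fun s => s.card = i + 1)} :=
    Equiv.subtypeEquivRight (by intro s; simp [Set.Finite.mem_toFinset])
  rw [SComplex.fcount, Nat.card_congr e, Nat.card_eq_fintype_card, Fintype.card_coe]

lemma lm_measurable {n : ℕ} (S : Set (Triple n → Bool)) : MeasurableSet S := by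
  have h1 : ∀ ω : Triple n → Bool, MeasurableSet ({ω} : Set (Triple n → Bool)) := by
    intro ω
    have h : ({ω} : Set (Triple n → Bool)) = Set.pi Set.univ (fun t => {ω t}) := by
      ext f
      simp [Set.mem_pi, funext_iff]
    rw [h]
    exact MeasurableSet.pi (Set.to_countable _) fun t _ => measurableSet_singleton _
  have h2 : S = ⋃ ω ∈ S, {ω} := by simp
  rw [h2]
  exact MeasurableSet.biUnion (Set.to_countable _) fun ω _ => h1 ω

lemma event_measure {n : ℕ} (p : ℝ) (T : Finset (Triple n)) :
    lmMeasure n p {ω | ∀ t ∈ T, ω t = true} ≤ ENNReal.ofReal p ^ T.card := by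
  classical
  have hset : {ω : Triple n → Bool | ∀ t ∈ T, ω t = true}
      = Set.pi Set.univ (fun t => if t ∈ T then ({true} : Set Bool) else Set.univ) := by
    ext ω
    simp only [Set.mem_setOf_eq, Set.mem_pi, Set.mem_univ, forall_true_left]
    constructor
    · intro h t
      by_cases ht : t ∈ T
      · simp [ht, h t ht]
      · simp [ht]
    · intro h t ht
      have h' := h t
      rw [if_pos ht] at h'
      simpa using h'
  rw [lmMeasure, hset, MeasureTheory.Measure.pi_pi]
  have hq : bern p ({true} : Set Bool) ≤ ENNReal.ofReal p := by
    rw [bern, PMF.toMeasure_apply_singleton _ _ (measurableSet_singleton _)]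
    simp only [PMF.bernoulli_apply, cond_true]
    exact ENNReal.coe_le_coe.mpr (min_le_left _ _)
  have hfilter : Finset.univ.filter (fun t => t ∈ T) = T := by ext t; simp
  have heq : (∏ t : Triple n, bern p (if t ∈ T then ({true} : Set Bool) else Set.univ))
      = bern p ({true} : Set Bool) ^ T.card := by
    rw [← Finset.prod_filter_mul_prod_filter_not Finset.univ (fun t => t ∈ T)]
    rw [Finset.prod_congr hfilter (fun t ht => by rw [if_pos ht]), Finset.prod_const]
    have h2 : ∀ t ∈ Finset.univ.filter (fun t => ¬ t ∈ T),
        bern p (if t ∈ T then ({true} : Set Bool) else Set.univ) = 1 := by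
      intro t ht
      rw [if_neg (Finset.mem_filter.mp ht).2]
      exact measure_univ
    rw [Finset.prod_congr rfl h2, Finset.prod_const_one, mul_one]
  rw [heq]
  gcongr

lemma count_bound {n d k : ℕ} (A : Finset (Finset (Fin n) × Finset (Triple n)))
    (hA : ∀ x ∈ A, x.1.card = d ∧ x.2.card = k ∧
      ∀ t ∈ x.2, ∀ v : Fin n, v ∈ t.1 → ((v : ℕ) < 3 ∨ v ∈ x.1)) :
    A.card ≤ 2 ^ ((d + 3) ^ 3) * n ^ d := by
  classical
  have hA1 : A.card ≤ 2 ^ ((d + 3) ^ 3) *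
      ((Finset.univ : Finset (Fin n)).powersetCard d).card := by
    apply Finset.card_le_mul_card_image_of_maps_to (f := Prod.fst)
    · intro x hx
      rw [Finset.mem_powersetCard]
      exact ⟨Finset.subset_univ _, (hA x hx).1⟩
    · intro E hE
      have hEd : E.card = d := (Finset.mem_powersetCard.mp hE).2
      set allowed := Finset.univ.filter
        (fun t : Triple n => ∀ v ∈ t.1, (v : ℕ) < 3 ∨ v ∈ E) with hallowed
      have hcard_allowed : allowed.card ≤ (d + 3) ^ 3 := by
        have h1 : allowed.card ≤
            ((E ∪ Finset.univ.filter (fun v : Fin n => (v : ℕ) < 3)).powersetCard 3).card := by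
          apply Finset.card_le_card_of_injOn (fun t => t.1)
          · intro t ht
            apply Finset.mem_coe.mpr
            rw [Finset.mem_powersetCard]
            constructor
            · intro v hv
              rcases (Finset.mem_filter.mp ht).2 v hv with h | h
              · exact Finset.mem_union_right _ (Finset.mem_filter.mpr ⟨Finset.mem_univ _, h⟩)
              · exact Finset.mem_union_left _ h
            · exact t.2
          · intro t₁ _ t₂ _ h
            exact Subtype.ext h
        rw [Finset.card_powersetCard] at h1
        have h3 : (Finset.univ.filter (fun v : Fin n => (v : ℕ) < 3)).card ≤ 3 := by
          have := Finset.card_le_card_of_injOn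
            (s := Finset.univ.filter (fun v : Fin n => (v : ℕ) < 3)) (t := Finset.range 3)
            (fun v : Fin n => (v : ℕ))
            (fun v hv => Finset.mem_range.mpr (Finset.mem_filter.mp hv).2)
            (fun a _ b _ h => Fin.val_injective h)
          simpa using this
        have h2 : (E ∪ Finset.univ.filter (fun v : Fin n => (v : ℕ) < 3)).card ≤ d + 3 := by
          have := Finset.card_union_le E (Finset.univ.filter (fun v : Fin n => (v : ℕ) < 3))
          omega
        calc allowed.card ≤ _ := h1
          _ ≤ Nat.choose (d + 3) 3 := Nat.choose_le_choose _ h2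
          _ ≤ (d + 3) ^ 3 := Nat.choose_le_pow _ _
      calc (A.filter (fun x => x.1 = E)).card
          ≤ allowed.powerset.card := by
            apply Finset.card_le_card_of_injOn (fun x => x.2)
            · intro x hx
              obtain ⟨hxA, hxE⟩ := Finset.mem_filter.mp hx
              apply Finset.mem_coe.mpr
              rw [Finset.mem_powerset]
              intro t ht
              rw [hallowed, Finset.mem_filter]
              refine ⟨Finset.mem_univ _, fun v hv => ?_⟩
              have := (hA x hxA).2.2 t ht v hv
              rwa [hxE] at this
            · intro x₁ h₁ x₂ h₂ h
              have e₁ := (Finset.mem_filter.mp h₁).2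
              have e₂ := (Finset.mem_filter.mp h₂).2
              exact Prod.ext (e₁.trans e₂.symm) h
        _ = 2 ^ allowed.card := by rw [Finset.card_powerset]
        _ ≤ 2 ^ ((d + 3) ^ 3) := Nat.pow_le_pow_right (by norm_num) hcard_allowed
  calc A.card ≤ _ := hA1
    _ = 2 ^ ((d + 3) ^ 3) * Nat.choose n d := by
        rw [Finset.card_powersetCard, Finset.card_univ, Fintype.card_fin]
    _ ≤ 2 ^ ((d + 3) ^ 3) * n ^ d := Nat.mul_le_mul_left _ (Nat.choose_le_pow _ _)

end AuxLemmas
open Finset in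
lemma exists_bad {n m : ℕ} {eps : ℝ} (ω : Triple n → Bool)
    (h : ¬ SparseEM3 eps m (lmComplex n ω)) :
    ∃ T : Finset (Triple n), 1 ≤ T.card ∧ T.card ≤ m ∧ (∀ t ∈ T, ω t = true) ∧
      ((((T.biUnion fun t => t.1).filter (fun v : Fin n => 3 ≤ (v : ℕ))).card : ℝ)
        < (1/2 + eps) * T.card) := by
  classical
  unfold SparseEM3 at h
  push_neg at h
  obtain ⟨Z, hfin, hdim, h1, h2, h3, hf2m, hf0, hincl⟩ := h
  obtain ⟨g, hginj, ⟨hg1, hg2, hg3⟩, hgface⟩ := hincl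
  -- vertex set of Z
  have hmemV : ∀ {s : Finset ℕ}, s ∈ Z.faces → ∀ {v : ℕ}, v ∈ s →
      ({v} : Finset ℕ) ∈ Z.faces := by
    intro s hs v hv
    exact Z.down_closed s hs {v} (Finset.singleton_subset_iff.mpr hv) (Finset.singleton_nonempty v)
  set F2 := hfin.toFinset.filter (fun s => s.card = 2 + 1) with hF2
  have hfc2 : Z.fcount 2 = F2.card := fcount_eq_card hfin 2
  have himgcard : ∀ s ∈ Z.faces, (s.image g).card = s.card := by
    intro s hs
    exact Finset.card_image_of_injOn
      (fun v hv w hw hvw => hginj (hmemV hs hv) (hmemV hs hw) hvw)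
  have hex : ∀ s ∈ F2, ∃ t : Triple n, ω t = true ∧
      s.image g = t.1.image (fun v : Fin n => (v : ℕ) + 1) := by
    intro s hs
    rw [hF2, Finset.mem_filter, Set.Finite.mem_toFinset] at hs
    obtain ⟨hsZ, hs3⟩ := hs
    obtain ⟨-, -, hcase⟩ := hgface s hsZ
    rcases hcase with hle | ⟨t, ht, heq⟩
    · rw [himgcard s hsZ] at hle; omega
    · exact ⟨t, ht, heq⟩
  set φ : {s // s ∈ F2} → Triple n := fun s => (hex s.1 s.2).choose with hφdef
  have hφ : ∀ s : {s // s ∈ F2}, ω (φ s) = true ∧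
      s.1.image g = (φ s).1.image (fun v : Fin n => (v : ℕ) + 1) :=
    fun s => (hex s.1 s.2).choose_spec
  have hinj_img : ∀ s₁ ∈ Z.faces, ∀ s₂ ∈ Z.faces, s₁.image g = s₂.image g → s₁ = s₂ := by
    intro s₁ hs₁ s₂ hs₂ hI
    apply Finset.coe_injective
    refine (Set.InjOn.image_eq_image_iff hginj ?_ ?_).mp ?_
    · intro v hv; exact hmemV hs₁ hv
    · intro v hv; exact hmemV hs₂ hv
    · rw [← Finset.coe_image, ← Finset.coe_image, hI]
  have hφinj : Function.Injective φ := by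
    intro s₁ s₂ hφeq
    have e₁ := (hφ s₁).2
    have e₂ := (hφ s₂).2
    rw [hφeq, ← e₂] at e₁
    apply Subtype.ext
    have m₁ := (Set.Finite.mem_toFinset hfin).mp (Finset.mem_filter.mp s₁.2).1
    have m₂ := (Set.Finite.mem_toFinset hfin).mp (Finset.mem_filter.mp s₂.2).1
    exact hinj_img _ m₁ _ m₂ e₁
  set T := F2.attach.image φ with hT
  have hTcard : T.card = F2.card := by
    rw [hT, Finset.card_image_of_injective _ hφinj, Finset.card_attach]
  have hTtrue : ∀ t ∈ T, ω t = true := by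
    intro t ht
    obtain ⟨s, -, rfl⟩ := Finset.mem_image.mp ht
    exact (hφ s).1
  -- 0-faces
  set F0 := hfin.toFinset.filter (fun s => s.card = 0 + 1) with hF0
  have hfc0 : Z.fcount 0 = F0.card := fcount_eq_card hfin 0
  set Vfin := F0.biUnion id with hVfin
  have hVmem : ∀ v : ℕ, v ∈ Vfin ↔ ({v} : Finset ℕ) ∈ Z.faces := by
    intro v
    rw [hVfin]
    simp only [Finset.mem_biUnion, id]
    constructor
    · rintro ⟨s, hs, hvs⟩
      rw [hF0, Finset.mem_filter, Set.Finite.mem_toFinset] at hs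
      obtain ⟨a, rfl⟩ := Finset.card_eq_one.mp hs.2
      rw [Finset.mem_singleton] at hvs
      subst hvs
      exact hs.1
    · intro hv
      refine ⟨{v}, ?_, Finset.mem_singleton_self v⟩
      rw [hF0, Finset.mem_filter, Set.Finite.mem_toFinset]
      exact ⟨hv, Finset.card_singleton v⟩
  have hVcard : Vfin.card = F0.card := by
    have hdisj : ∀ s ∈ F0, ∀ t ∈ F0, s ≠ t → Disjoint (id s) (id t) := by
      intro s hs t ht hst
      obtain ⟨a, rfl⟩ := Finset.card_eq_one.mp (Finset.mem_filter.mp hs).2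
      obtain ⟨b, rfl⟩ := Finset.card_eq_one.mp (Finset.mem_filter.mp ht).2
      simp only [id]
      rw [Finset.disjoint_singleton]
      intro hab
      exact hst (by rw [hab])
    have hsum : ∀ s ∈ F0, (id s).card = 1 := by
      intro s hs
      simpa using (Finset.mem_filter.mp hs).2
    rw [hVfin, Finset.card_biUnion hdisj, Finset.sum_congr rfl hsum, Finset.sum_const,
      smul_eq_mul, mul_one]
  have h3F0 : 3 ≤ F0.card := by
    have hsub : ({({1} : Finset ℕ), {2}, {3}} : Finset (Finset ℕ)) ⊆ F0 := by
      intro s hs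
      simp only [Finset.mem_insert, Finset.mem_singleton] at hs
      rw [hF0, Finset.mem_filter, Set.Finite.mem_toFinset]
      rcases hs with rfl | rfl | rfl
      · exact ⟨h1, Finset.card_singleton _⟩
      · exact ⟨h2, Finset.card_singleton _⟩
      · exact ⟨h3, Finset.card_singleton _⟩
    have := Finset.card_le_card hsub
    have hc : ({({1} : Finset ℕ), {2}, {3}} : Finset (Finset ℕ)).card = 3 := by decide
    omega
  have hF2pos : 0 < F2.card := by
    by_contra h0
    push_neg at h0
    have hz : Z.fcount 2 = 0 := by omega
    rw [hz] at hf0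
    have : (3 : ℝ) ≤ (Z.fcount 0 : ℝ) := by
      rw [hfc0]; exact_mod_cast h3F0
    push_cast at hf0
    linarith
  refine ⟨T, by omega, by rw [hTcard, ← hfc2]; exact hf2m, hTtrue, ?_⟩
  set E := (T.biUnion fun t => t.1).filter (fun v : Fin n => 3 ≤ (v : ℕ)) with hE
  -- each shifted extra vertex is in the image of Vfin under g, and is ≥ 4
  have hEprop : ∀ v ∈ E, ((v : ℕ) + 1) ∈ Vfin.image g ∧ 4 ≤ (v : ℕ) + 1 := by
    intro v hv
    rw [hE, Finset.mem_filter] at hv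
    obtain ⟨hvb, hv3⟩ := hv
    obtain ⟨t, htT, hvt⟩ := Finset.mem_biUnion.mp hvb
    obtain ⟨s, -, rfl⟩ := Finset.mem_image.mp htT
    have hv1 : ((v : ℕ) + 1) ∈ s.1.image g := by
      rw [(hφ s).2]
      exact Finset.mem_image_of_mem _ hvt
    obtain ⟨w, hws, hwg⟩ := Finset.mem_image.mp hv1
    have hsZ : s.1 ∈ Z.faces := (Set.Finite.mem_toFinset hfin).mp (Finset.mem_filter.mp s.2).1
    refine ⟨Finset.mem_image.mpr ⟨w, ?_, hwg⟩, by omega⟩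
    rw [hVmem]
    exact hmemV hsZ hws
  set Eimg := E.image (fun v : Fin n => (v : ℕ) + 1) with hEimg
  have h4 : ∀ x ∈ Eimg, 4 ≤ x := by
    intro x hx
    obtain ⟨v, hv, rfl⟩ := Finset.mem_image.mp hx
    exact (hEprop v hv).2
  have hshiftinj : Function.Injective (fun v : Fin n => (v : ℕ) + 1) := by
    intro a b hab
    have hab' : (a : ℕ) + 1 = (b : ℕ) + 1 := hab
    exact Fin.val_injective (by omega)
  have hW : insert 1 (insert 2 (insert 3 Eimg)) ⊆ Vfin.image g := by
    intro x hx
    simp only [Finset.mem_insert] at hx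
    rcases hx with rfl | rfl | rfl | hx
    · exact Finset.mem_image.mpr ⟨1, (hVmem 1).mpr h1, hg1⟩
    · exact Finset.mem_image.mpr ⟨2, (hVmem 2).mpr h2, hg2⟩
    · exact Finset.mem_image.mpr ⟨3, (hVmem 3).mpr h3, hg3⟩
    · obtain ⟨v, hv, rfl⟩ := Finset.mem_image.mp hx
      exact (hEprop v hv).1
  have hWcard : (insert 1 (insert 2 (insert 3 Eimg))).card = E.card + 3 := by
    rw [Finset.card_insert_of_notMem, Finset.card_insert_of_notMem,
      Finset.card_insert_of_notMem, Finset.card_image_of_injective _ hshiftinj]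
    · intro hc; have := h4 _ hc; omega
    · intro hc
      simp only [Finset.mem_insert] at hc
      rcases hc with hc | hc
      · omega
      · have := h4 _ hc; omega
    · intro hc
      simp only [Finset.mem_insert] at hc
      rcases hc with hc | hc | hc
      · omega
      · omega
      · have := h4 _ hc; omega
  have hVimg : (Vfin.image g).card = Vfin.card := by
    apply Finset.card_image_of_injOn
    intro a ha b hb hab
    exact hginj ((hVmem a).mp ha) ((hVmem b).mp hb) hab
  have hEle : E.card + 3 ≤ Vfin.card := by
    have := Finset.card_le_card hW
    rw [hWcard, hVimg] at this
    omega
  have hcast : (E.card : ℝ) + 3 ≤ (Z.fcount 0 : ℝ) := by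
    rw [hfc0, ← hVcard]
    exact_mod_cast hEle
  have hTc : (T.card : ℝ) = (Z.fcount 2 : ℝ) := by
    rw [hfc2, hTcard]
  rw [hTc]
  linarith
instance lmMeasure_prob (n : ℕ) (p : ℝ) : MeasureTheory.IsProbabilityMeasure (lmMeasure n p) :=
  inferInstanceAs (MeasureTheory.IsProbabilityMeasure (MeasureTheory.Measure.pi fun _ => bern p))

/-- For every `m ∈ ℤ⁺`, every `ε > 0` and every
`p = O(n^{-1/2-ε})`, the Linial–Meshulam random complex `Y(n,p)` is a.a.s.
`(ε, m, 3)`-sparse. -/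
theorem lm_aas_sparse
    (m : ℕ) (hm : 0 < m) (eps : ℝ) (heps : 0 < eps)
    (p : ℕ → ℝ) (hp0 : ∀ n, 0 ≤ p n)
    (hp : Asymptotics.IsBigO Filter.atTop p (fun n : ℕ => (n : ℝ) ^ (-(1/2 : ℝ) - eps))) :
    Filter.Tendsto
      (fun n => lmMeasure n (p n)
        {ω : Triple n → Bool | SparseEM3 eps m (lmComplex n ω)})
      Filter.atTop (nhds 1) := by
  classical
  set D : ℕ := ⌈(1/2 + eps) * m⌉₊ with hD
  set pairs : Finset (ℕ × ℕ) := (Finset.range (D+1)) ×ˢ (Finset.range (m+1)) with hpairs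
  set term : ℕ × ℕ → ℕ → ℝ≥0∞ := fun b n =>
    if (b.1 : ℝ) < (1/2 + eps) * b.2 ∧ 1 ≤ b.2 then
      (2 : ℝ≥0∞) ^ ((b.1 + 3) ^ 3) * (n : ℝ≥0∞) ^ b.1 * ENNReal.ofReal (p n) ^ b.2
    else 0 with hterm
  -- Step 1: union bound
  have key : ∀ n : ℕ,
      lmMeasure n (p n) ({ω : Triple n → Bool | SparseEM3 eps m (lmComplex n ω)}ᶜ)
        ≤ ∑ b ∈ pairs, term b n := by
    intro n
    set I : Finset (Finset (Fin n) × Finset (Triple n)) :=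
      Finset.univ.filter (fun x => 1 ≤ x.2.card ∧ x.2.card ≤ m ∧
        ((x.1.card : ℝ) < (1/2 + eps) * x.2.card) ∧
        ∀ t ∈ x.2, ∀ v : Fin n, v ∈ t.1 → ((v : ℕ) < 3 ∨ v ∈ x.1)) with hI
    have hcover : {ω : Triple n → Bool | SparseEM3 eps m (lmComplex n ω)}ᶜ
        ⊆ ⋃ x ∈ I, {ω : Triple n → Bool | ∀ t ∈ x.2, ω t = true} := by
      intro ω hω
      obtain ⟨T, hT1, hTm, hTtrue, hTe⟩ := exists_bad ω hω
      have hmem : ((T.biUnion fun t => t.1).filter (fun v : Fin n => 3 ≤ (v : ℕ)), T) ∈ I := by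
        rw [hI, Finset.mem_filter]
        refine ⟨Finset.mem_univ _, hT1, hTm, hTe, ?_⟩
        intro t ht v hv
        by_cases h3 : (v : ℕ) < 3
        · exact Or.inl h3
        · exact Or.inr (Finset.mem_filter.mpr ⟨Finset.mem_biUnion.mpr ⟨t, ht, hv⟩, by omega⟩)
      exact Set.mem_biUnion hmem hTtrue
    have hmaps : ∀ x ∈ I, (x.1.card, x.2.card) ∈ pairs := by
      intro x hx
      obtain ⟨-, hx1, hx2, hx3, -⟩ := Finset.mem_filter.mp hx
      rw [hpairs, Finset.mem_product, Finset.mem_range, Finset.mem_range]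
      have hxm : ((x.2.card : ℝ)) ≤ (m : ℝ) := Nat.cast_le.mpr hx2
      have hle : (x.1.card : ℝ) ≤ (1/2 + eps) * m := by nlinarith
      have hDle : (x.1.card : ℝ) ≤ (D : ℝ) := hle.trans (Nat.le_ceil _)
      have hDle' : x.1.card ≤ D := Nat.cast_le.mp hDle
      exact ⟨by omega, by omega⟩
    calc lmMeasure n (p n) ({ω : Triple n → Bool | SparseEM3 eps m (lmComplex n ω)}ᶜ)
        ≤ lmMeasure n (p n) (⋃ x ∈ I, {ω : Triple n → Bool | ∀ t ∈ x.2, ω t = true}) :=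
          measure_mono hcover
      _ ≤ ∑ x ∈ I, lmMeasure n (p n) {ω : Triple n → Bool | ∀ t ∈ x.2, ω t = true} :=
          measure_biUnion_finset_le _ _
      _ ≤ ∑ x ∈ I, ENNReal.ofReal (p n) ^ x.2.card :=
          Finset.sum_le_sum (fun x _ => event_measure (p n) x.2)
      _ = ∑ b ∈ pairs, ∑ x ∈ I.filter (fun x => (x.1.card, x.2.card) = b),
            ENNReal.ofReal (p n) ^ x.2.card :=
          (Finset.sum_fiberwise_of_maps_to hmaps _).symm
      _ ≤ ∑ b ∈ pairs, term b n := by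
          apply Finset.sum_le_sum
          intro b _
          by_cases hb : (b.1 : ℝ) < (1/2 + eps) * b.2 ∧ 1 ≤ b.2
          · rw [hterm]
            simp only [if_pos hb]
            have hcardle : (I.filter (fun x => (x.1.card, x.2.card) = b)).card
                ≤ 2 ^ ((b.1 + 3) ^ 3) * n ^ b.1 := by
              apply count_bound
              intro x hx
              obtain ⟨hxI, hxb⟩ := Finset.mem_filter.mp hx
              obtain ⟨e1, e2⟩ := Prod.mk.injEq _ _ _ _ ▸ hxb
              obtain ⟨-, -, -, -, hvert⟩ := Finset.mem_filter.mp hxI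
              exact ⟨e1, e2, hvert⟩
            have hfib : ∀ x ∈ I.filter (fun x => (x.1.card, x.2.card) = b),
                ENNReal.ofReal (p n) ^ x.2.card = ENNReal.ofReal (p n) ^ b.2 := by
              intro x hx
              obtain ⟨-, hxb⟩ := Finset.mem_filter.mp hx
              obtain ⟨-, e2⟩ := Prod.mk.injEq _ _ _ _ ▸ hxb
              rw [e2]
            calc (∑ x ∈ I.filter (fun x => (x.1.card, x.2.card) = b),
                  ENNReal.ofReal (p n) ^ x.2.card)
                = ∑ _x ∈ I.filter (fun x => (x.1.card, x.2.card) = b),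
                    ENNReal.ofReal (p n) ^ b.2 := Finset.sum_congr rfl hfib
              _ = ((I.filter (fun x => (x.1.card, x.2.card) = b)).card : ℝ≥0∞)
                    * ENNReal.ofReal (p n) ^ b.2 := by
                  rw [Finset.sum_const, nsmul_eq_mul]
              _ ≤ ((2 ^ ((b.1 + 3) ^ 3) * n ^ b.1 : ℕ) : ℝ≥0∞)
                    * ENNReal.ofReal (p n) ^ b.2 := by
                  exact mul_le_mul_left (by exact_mod_cast hcardle) _
              _ = (2 : ℝ≥0∞) ^ ((b.1 + 3) ^ 3) * (n : ℝ≥0∞) ^ b.1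
                    * ENNReal.ofReal (p n) ^ b.2 := by
                  push_cast
                  ring
          · rw [hterm]
            simp only [if_neg hb]
            have hempty : I.filter (fun x => (x.1.card, x.2.card) = b) = ∅ := by
              apply Finset.eq_empty_of_forall_notMem
              intro x hx
              obtain ⟨hxI, hxb⟩ := Finset.mem_filter.mp hx
              obtain ⟨e1, e2⟩ := Prod.mk.injEq _ _ _ _ ▸ hxb
              obtain ⟨-, hc1, -, hc3, -⟩ := Finset.mem_filter.mp hxI
              exact hb ⟨e1 ▸ e2 ▸ hc3, e2 ▸ hc1⟩
            rw [hempty, Finset.sum_empty]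
  -- Step 2: the bound tends to 0
  have hbound : Filter.Tendsto (fun n => ∑ b ∈ pairs, term b n) Filter.atTop (nhds 0) := by
    have h0 : (0 : ℝ≥0∞) = ∑ _b ∈ pairs, (0 : ℝ≥0∞) := by simp
    rw [h0]
    apply tendsto_finset_sum
    intro b _
    rw [hterm]
    by_cases hb : (b.1 : ℝ) < (1/2 + eps) * b.2 ∧ 1 ≤ b.2
    · simp only [if_pos hb]
      obtain ⟨hd, hk⟩ := hb
      obtain ⟨A, hA0, hAw⟩ := hp.exists_pos
      have hAev := hAw.bound
      set c : ℝ := -(1/2 : ℝ) - eps with hc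
      set e : ℝ := (b.1 : ℝ) + c * b.2 with he
      have he0 : e < 0 := by
        have : c * (b.2 : ℝ) = -((1/2 + eps) * b.2) := by rw [hc]; ring
        rw [he, this]
        linarith
      have hrp : Filter.Tendsto (fun x : ℕ => (x : ℝ) ^ e) Filter.atTop (nhds 0) := by
        have h := tendsto_rpow_neg_atTop (y := -e) (by linarith)
        have h2 := h.comp (tendsto_natCast_atTop_atTop (R := ℝ))
        simpa [neg_neg, Function.comp_def] using h2
      have hreal : Filter.Tendsto
          (fun n : ℕ => (2 : ℝ) ^ ((b.1 + 3) ^ 3) * (n : ℝ) ^ b.1 * (p n) ^ b.2)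
          Filter.atTop (nhds 0) := by
        have hg : Filter.Tendsto
            (fun n : ℕ => ((2 : ℝ) ^ ((b.1 + 3) ^ 3) * A ^ b.2) * (n : ℝ) ^ e)
            Filter.atTop (nhds 0) := by
          have := hrp.const_mul ((2 : ℝ) ^ ((b.1 + 3) ^ 3) * A ^ b.2)
          simpa using this
        apply squeeze_zero' (Filter.Eventually.of_forall fun n => mul_nonneg (by positivity) (pow_nonneg (hp0 n) _)) ?_ hg
        filter_upwards [hAev, Filter.eventually_ge_atTop 1] with x hx hx1
        have hxpos : (0 : ℝ) < (x : ℝ) := by exact_mod_cast Nat.lt_of_lt_of_le Nat.zero_lt_one hx1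
        have hrpos : (0 : ℝ) < (x : ℝ) ^ c := Real.rpow_pos_of_pos hxpos c
        have hpx : p x ≤ A * (x : ℝ) ^ c := by
          rw [Real.norm_eq_abs, Real.norm_eq_abs, abs_of_nonneg (hp0 x), abs_of_pos hrpos] at hx
          exact hx
        have hpk : (p x) ^ b.2 ≤ (A * (x : ℝ) ^ c) ^ b.2 := pow_le_pow_left₀ (hp0 x) hpx _
        calc (2 : ℝ) ^ ((b.1 + 3) ^ 3) * (x : ℝ) ^ b.1 * (p x) ^ b.2
            ≤ (2 : ℝ) ^ ((b.1 + 3) ^ 3) * (x : ℝ) ^ b.1 * (A * (x : ℝ) ^ c) ^ b.2 := by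
              apply mul_le_mul_of_nonneg_left hpk (by positivity)
          _ = ((2 : ℝ) ^ ((b.1 + 3) ^ 3) * A ^ b.2) * ((x : ℝ) ^ b.1 * ((x : ℝ) ^ c) ^ b.2) := by
              ring
          _ = ((2 : ℝ) ^ ((b.1 + 3) ^ 3) * A ^ b.2) * (x : ℝ) ^ e := by
              rw [← Real.rpow_natCast (x : ℝ) b.1, ← Real.rpow_natCast ((x : ℝ) ^ c) b.2,
                ← Real.rpow_mul hxpos.le, ← Real.rpow_add hxpos, he]
      have hconv : ∀ n : ℕ,
          (2 : ℝ≥0∞) ^ ((b.1 + 3) ^ 3) * (n : ℝ≥0∞) ^ b.1 * ENNReal.ofReal (p n) ^ b.2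
            = ENNReal.ofReal ((2 : ℝ) ^ ((b.1 + 3) ^ 3) * (n : ℝ) ^ b.1 * (p n) ^ b.2) := by
        intro n
        rw [ENNReal.ofReal_mul (by positivity), ENNReal.ofReal_mul (by positivity),
          ENNReal.ofReal_pow (hp0 n), ENNReal.ofReal_pow (by norm_num : (0:ℝ) ≤ 2),
          ENNReal.ofReal_pow (Nat.cast_nonneg n), ENNReal.ofReal_natCast,
          ENNReal.ofReal_ofNat]
      simp only [hconv]
      have := ENNReal.tendsto_ofReal hreal
      simpa using this
    · simp only [if_neg hb]
      exact tendsto_const_nhds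
  -- Step 3: conclude
  have hcompl : Filter.Tendsto
      (fun n => lmMeasure n (p n) ({ω : Triple n → Bool | SparseEM3 eps m (lmComplex n ω)}ᶜ))
      Filter.atTop (nhds 0) :=
    tendsto_of_tendsto_of_tendsto_of_le_of_le tendsto_const_nhds hbound
      (fun n => zero_le) key
  have heq : ∀ n : ℕ, lmMeasure n (p n) {ω : Triple n → Bool | SparseEM3 eps m (lmComplex n ω)}
      = 1 - lmMeasure n (p n) ({ω : Triple n → Bool | SparseEM3 eps m (lmComplex n ω)}ᶜ) := by
    intro n
    rw [measure_compl (lm_measurable _) (measure_ne_top _ _), measure_univ]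
    exact (ENNReal.sub_sub_cancel ENNReal.one_ne_top prob_le_one).symm
  have hfun : (fun n => lmMeasure n (p n)
        {ω : Triple n → Bool | SparseEM3 eps m (lmComplex n ω)})
      = fun n => 1 - lmMeasure n (p n)
        ({ω : Triple n → Bool | SparseEM3 eps m (lmComplex n ω)}ᶜ) := funext heq
  rw [hfun]
  have hfinal := ENNReal.Tendsto.sub
    (tendsto_const_nhds : Filter.Tendsto (fun _ : ℕ => (1 : ℝ≥0∞)) Filter.atTop (nhds 1))
    hcompl (Or.inl ENNReal.one_ne_top)
  simpa using hfinal
end
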